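/- arXiv:1709.04753 — 6 statements merged into one kernel-verified Lean document; each statement's English description precedes it below -/
import Mathlib

section
/- Let d be a natural number and let Λ be an Iwanaga–Gorenstein ring of dimension at most d. Let N be a finitely generated left Λ-module and let 0 → M → P_{d-1} → ⋯ → P_1 → P_0 → N → 0 be an exact sequence of finitely generated left Λ-modules in which P_0, …, P_{d-1} are projective (so M is a d-th syzygy of N). Then M is Gorenstein projective, i.e., Ext^i_Λ(M, Λ) = 0 for all i > 0. In particular, for every n ≥ d, every n-th syzygy of a finitely generated left Λ-module is Gorenstein projective. -/
open CategoryTheory Opposite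
open Limits

/-- The `i`-th Ext group `Ext^i_Λ(M, Λ)` computed in the abelian category of left
`Λ`-modules (with `Λ` viewed as a left module over itself). -/
noncomputable def extSelf (Λ : Type) [Ring Λ] (M : ModuleCat.{0} Λ) (i : ℕ) : ModuleCat ℤ :=
  ((Ext ℤ (ModuleCat.{0} Λ) i).obj (op M)).obj (ModuleCat.of Λ Λ)

/-- The `i`-th Ext group `Ext^i_{Λᵒᵖ}(N, Λ)` computed in the abelian category of right
`Λ`-modules, i.e. left modules over the opposite ring. -/
noncomputable def extSelfOp (Λ : Type) [Ring Λ] (N : ModuleCat.{0} Λᵐᵒᵖ) (i : ℕ) : ModuleCat ℤ :=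
  ((Ext ℤ (ModuleCat.{0} Λᵐᵒᵖ) i).obj (op N)).obj (ModuleCat.of Λᵐᵒᵖ Λ)

/-- A left `Λ`-module `M` is Gorenstein projective if `Ext^i_Λ(M, Λ) = 0` for all `i > 0`. -/
def IsGorensteinProjective (Λ : Type) [Ring Λ] (M : ModuleCat.{0} Λ) : Prop :=
  ∀ i : ℕ, 0 < i → Limits.IsZero (extSelf Λ M i)

/-- A ring `Λ` is Iwanaga–Gorenstein of dimension at most `d` if it is left and right
Noetherian and `Ext^i(N, Λ)` vanishes for `i > d` for all finitely generated left modules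
`N` as well as for all finitely generated right modules `N`. -/
def IsIwanagaGorenstein (Λ : Type) [Ring Λ] (d : ℕ) : Prop :=
  IsNoetherianRing Λ ∧ IsNoetherianRing Λᵐᵒᵖ ∧
    (∀ N : ModuleCat.{0} Λ, Module.Finite Λ N → ∀ i : ℕ, d < i →
      Limits.IsZero (extSelf Λ N i)) ∧
    (∀ N : ModuleCat.{0} Λᵐᵒᵖ, Module.Finite Λᵐᵒᵖ N → ∀ i : ℕ, d < i →
      Limits.IsZero (extSelfOp Λ N i))

namespace SyzygyAux

variable {Λ : Type} [Ring Λ]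
variable (S : ShortComplex (ModuleCat.{0} Λ)) (Q : ProjectiveResolution S.X₁)

noncomputable def spliceX : ℕ → ModuleCat.{0} Λ
  | 0 => S.X₂
  | (k+1) => Q.complex.X k

noncomputable def spliceD : ∀ k, spliceX S Q (k+1) ⟶ spliceX S Q k
  | 0 => Q.π.f 0 ≫ S.f
  | (k+1) => Q.complex.d (k+1) k

noncomputable def spliceComplex : ChainComplex (ModuleCat.{0} Λ) ℕ :=
  ChainComplex.of (spliceX S Q) (spliceD S Q) (by
    rintro (_|k)
    · show Q.complex.d 1 0 ≫ (Q.π.f 0 ≫ S.f) = 0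
      exact (Category.assoc _ _ _).symm.trans ((Q.complex_d_comp_π_f_zero =≫ S.f).trans zero_comp)
    · show Q.complex.d (k+2) (k+1) ≫ Q.complex.d (k+1) k = 0
      simp)

lemma spliceComplex_d (k : ℕ) : (spliceComplex S Q).d (k+1) k = spliceD S Q k :=
  ChainComplex.of_d _ _ _

lemma spliceComplex_exactAt (hS : S.ShortExact) (k : ℕ) :
    (spliceComplex S Q).ExactAt (k+1) := by
  rw [HomologicalComplex.exactAt_iff' _ (k+2) (k+1) k (by simp) (by simp)]
  have hf : ((spliceComplex S Q).sc' (k+2) (k+1) k).f = spliceD S Q (k+1) :=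
    spliceComplex_d S Q (k+1)
  have hg : ((spliceComplex S Q).sc' (k+2) (k+1) k).g = spliceD S Q k :=
    spliceComplex_d S Q k
  rw [ShortComplex.moduleCat_exact_iff]
  intro x₂ hx₂
  rw [hg] at hx₂
  cases k with
  | zero =>
    -- x₂ : Q.complex.X 0, hx₂ : (Q.π.f 0 ≫ S.f) x₂ = 0
    have h0 : Q.π.f 0 x₂ = 0 := by
      apply hS.moduleCat_injective_f
      exact hx₂.trans (map_zero (ModuleCat.Hom.hom S.f)).symm
    obtain ⟨x₁, hx₁⟩ := (ShortComplex.moduleCat_exact_iff _).1 Q.exact₀ x₂ h0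
    exact ⟨x₁, by rw [hf]; exact hx₁⟩
  | succ k =>
    have hQ := Q.complex_exactAt_succ k
    rw [HomologicalComplex.exactAt_iff' _ (k+2) (k+1) k (by simp) (by simp),
      ShortComplex.moduleCat_exact_iff] at hQ
    obtain ⟨x₁, hx₁⟩ := hQ x₂ hx₂
    exact ⟨x₁, by rw [hf]; exact hx₁⟩

noncomputable def splicePi : spliceComplex S Q ⟶ (ChainComplex.single₀ _).obj S.X₃ :=
  (ChainComplex.toSingle₀Equiv _ _).symm ⟨S.g, by
    rw [spliceComplex_d]
    show (Q.π.f 0 ≫ S.f) ≫ S.g = 0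
    exact (Category.assoc _ _ _).trans ((Q.π.f 0 ≫= S.zero).trans comp_zero)⟩

lemma splicePi_f_zero : (splicePi S Q).f 0 = S.g :=
  ChainComplex.toSingle₀Equiv_symm_apply_f_zero _ _

noncomputable def spliceResolution (hS : S.ShortExact) [Projective S.X₂] :
    ProjectiveResolution S.X₃ where
  complex := spliceComplex S Q
  projective n := by
    cases n with
    | zero => exact (inferInstance : Projective S.X₂)
    | succ k => exact Q.projective k
  π := splicePi S Q
  quasiIso := ⟨fun n => by
    cases n with
    | succ n =>
      rw [quasiIsoAt_iff_exactAt']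
      · exact spliceComplex_exactAt S Q hS n
      · apply ChainComplex.exactAt_succ_single_obj
    | zero =>
      rw [ChainComplex.quasiIsoAt₀_iff, ShortComplex.quasiIso_iff_of_zeros']
      · have hzero : spliceD S Q 0 ≫ S.g = 0 := by
          show (Q.π.f 0 ≫ S.f) ≫ S.g = 0
          exact (Category.assoc _ _ _).trans ((Q.π.f 0 ≫= S.zero).trans comp_zero)
        refine (ShortComplex.exact_and_epi_g_iff_of_iso
          (ShortComplex.isoMk (Iso.refl _) (Iso.refl _) (Iso.refl _) ?_ ?_ :
            _ ≅ ShortComplex.mk (spliceD S Q 0) S.g hzero)).2 ⟨?_, ?_⟩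
        · simp only [Iso.refl_hom, Category.id_comp, Category.comp_id, spliceComplex_d]
        · simp only [Iso.refl_hom, Category.id_comp, Category.comp_id, splicePi_f_zero]
          exact (Category.id_comp _).trans (Category.comp_id _).symm
        · rw [ShortComplex.moduleCat_exact_iff]
          intro x₂ hx₂
          obtain ⟨a, ha⟩ := (ShortComplex.moduleCat_exact_iff _).1 hS.exact x₂ hx₂
          obtain ⟨b, hb⟩ := (ModuleCat.epi_iff_surjective (Q.π.f 0)).1 inferInstance a
          refine ⟨b, ?_⟩
          show S.f ((Q.π.f 0) b) = x₂
          rw [hb]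
          exact ha
        · exact hS.epi_g
      all_goals rfl⟩

end SyzygyAux

namespace SyzygyAux

variable {Λ : Type} [Ring Λ]
variable (S : ShortComplex (ModuleCat.{0} Λ)) (Q : ProjectiveResolution S.X₁)

noncomputable def spliceHomologyIso (Y : ModuleCat.{0} Λ) (j : ℕ) :
    ((spliceComplex S Q).linearYonedaObj ℤ Y).homology (j+2) ≅
      (Q.complex.linearYonedaObj ℤ Y).homology (j+1) :=
  (HomologicalComplex.homologyIsoSc' _ (j+1) (j+2) (j+3)
      (CochainComplex.prev_nat_succ _) (CochainComplex.next _ _)) ≪≫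
    ShortComplex.homologyMapIso
      ((ShortComplex.isoMk (Iso.refl _) (Iso.refl _) (Iso.refl _)
        (by
          simp only [Iso.refl_hom, Category.id_comp, Category.comp_id]
          show (Q.complex.linearYonedaObj ℤ Y).d j (j+1) =
            ((spliceComplex S Q).linearYonedaObj ℤ Y).d (j+1) (j+2)
          simp only [ChainComplex.linearYonedaObj_d, spliceComplex_d]
          rfl)
        (by
          simp only [Iso.refl_hom, Category.id_comp, Category.comp_id]
          show (Q.complex.linearYonedaObj ℤ Y).d (j+1) (j+2) =
            ((spliceComplex S Q).linearYonedaObj ℤ Y).d (j+2) (j+3)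
          simp only [ChainComplex.linearYonedaObj_d, spliceComplex_d]
          rfl)) :
        ((spliceComplex S Q).linearYonedaObj ℤ Y).sc' (j+1) (j+2) (j+3) ≅
          (Q.complex.linearYonedaObj ℤ Y).sc' j (j+1) (j+2)) ≪≫
    (HomologicalComplex.homologyIsoSc' _ j (j+1) (j+2)
      (CochainComplex.prev_nat_succ _) (CochainComplex.next _ _)).symm

lemma step_isZero (Q : ProjectiveResolution S.X₁)
    (hS : S.ShortExact) [Projective S.X₂] (Y : ModuleCat.{0} Λ) (j : ℕ)
    (h : Limits.IsZero (((Ext ℤ (ModuleCat.{0} Λ) (j+2)).obj (op S.X₃)).obj Y)) :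
    Limits.IsZero (((Ext ℤ (ModuleCat.{0} Λ) (j+1)).obj (op S.X₁)).obj Y) :=
  h.of_iso ((Q.isoExt (j+1) Y) ≪≫ (spliceHomologyIso S Q Y j).symm ≪≫
    ((spliceResolution S Q hS).isoExt (j+2) Y).symm)

end SyzygyAux

/-- Over an Iwanaga–Gorenstein ring of dimension at most `d`, for any `n ≥ d`, any `n`-th
syzygy of a finitely generated left module is Gorenstein projective.  Here the exact
sequence `0 → M → P_{n-1} → ⋯ → P_0 → N → 0` is encoded by `V 0 = N`, `V (n+1) = M`, and
projective finitely generated middle terms `V 1, …, V n`, with differentials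
`f i : V (i+1) ⟶ V i`. -/


theorem syzygy_isGorensteinProjective
    (Λ : Type) [Ring Λ] (d : ℕ) (hΛ : IsIwanagaGorenstein Λ d)
    (n : ℕ) (hn : d ≤ n)
    (V : ℕ → ModuleCat.{0} Λ) (f : ∀ i, V (i + 1) ⟶ V i)
    (hN : Module.Finite Λ (V 0))
    (hP : ∀ i, 1 ≤ i → i ≤ n → Module.Projective Λ (V i) ∧ Module.Finite Λ (V i))
    (hsurj : Function.Surjective (f 0))
    (hexact : ∀ i, i < n → Function.Exact (f (i + 1)) (f i))
    (hinj : Function.Injective (f n)) :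
    IsGorensteinProjective Λ (V (n + 1)) := by
  obtain ⟨-, -, hExt, -⟩ := hΛ
  intro i hi
  classical
  have key : ∀ j, j ≤ n → ∀ i, 0 < i → d < i + j →
      Limits.IsZero (((Ext ℤ (ModuleCat.{0} Λ) i).obj
        (op (ModuleCat.of Λ (LinearMap.range (f j).hom)))).obj (ModuleCat.of Λ Λ)) := by
    intro j
    induction j with
    | zero =>
      intro _ i _ hd
      have e : ModuleCat.of Λ (LinearMap.range (f 0).hom) ≅ V 0 :=
        (LinearEquiv.ofTop _ (LinearMap.range_eq_top.2 hsurj)).toModuleIso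
      exact (hExt (V 0) hN i (by simpa using hd)).of_iso
        (((Ext ℤ (ModuleCat.{0} Λ) i).mapIso e.symm.op).app (ModuleCat.of Λ Λ))
    | succ j ih =>
      intro hj i hi hd
      have hjn : j < n := hj
      have hz : (ModuleCat.ofHom (LinearMap.range (f (j+1)).hom).subtype) ≫
          (ModuleCat.ofHom (f j).hom.rangeRestrict) = 0 := by
        ext ⟨x, hx⟩
        exact (hexact j hjn x).mpr hx
      set S : ShortComplex (ModuleCat.{0} Λ) :=
        ShortComplex.mk (ModuleCat.ofHom (LinearMap.range (f (j+1)).hom).subtype)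
          (ModuleCat.ofHom (f j).hom.rangeRestrict) hz with hS_def
      haveI : Mono S.f := (ModuleCat.mono_iff_injective _).2 (Subtype.val_injective)
      haveI : Epi S.g := (ModuleCat.epi_iff_surjective _).2 (f j).hom.surjective_rangeRestrict
      have hSE : S.ShortExact := by
        refine ⟨?_⟩
        · rw [ShortComplex.moduleCat_exact_iff]
          intro x₂ hx₂
          have h0 : f j x₂ = 0 := by
            have := congrArg Subtype.val hx₂
            exact this
          obtain ⟨y, hy⟩ := (hexact j hjn x₂).mp h0
          exact ⟨⟨x₂, ⟨y, hy⟩⟩, rfl⟩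
      haveI : Projective S.X₂ :=
        (IsProjective.iff_projective _).1 (hP (j+1) (by omega) (by omega)).1
      obtain ⟨i', rfl⟩ : ∃ i', i = i' + 1 := ⟨i - 1, by omega⟩
      exact SyzygyAux.step_isZero S (ProjectiveResolution.of _) hSE (ModuleCat.of Λ Λ) i'
        (ih (by omega) (i' + 2) (by omega) (by omega))
  have e : V (n + 1) ≅ ModuleCat.of Λ (LinearMap.range (f n).hom) :=
    (LinearEquiv.ofInjective (f n).hom hinj).toModuleIso
  exact (key n le_rfl i hi (by omega)).of_iso
    (((Ext ℤ (ModuleCat.{0} Λ) i).mapIso e.symm.op).app (ModuleCat.of Λ Λ))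
end

section
/- Let d be a natural number, let Λ be an Iwanaga–Gorenstein ring of dimension at most d, and let M be a finitely generated Gorenstein projective left Λ-module. Equip the dual M* = Hom_Λ(M, Λ) with its natural structure of a right Λ-module (equivalently, of a left module over the opposite ring Λᵒᵖ), given by (f·λ)(m) = f(m)·λ. Then: (i) M* is a finitely generated Gorenstein projective right Λ-module, i.e., Ext^i_{Λᵒᵖ}(M*, Λ) = 0 for all i > 0, where Λ is viewed as a right module over itself; and (ii) the evaluation homomorphism M → Hom_{Λᵒᵖ}(M*, Λ), sending m to the map f ↦ f(m), is bijective. -/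
open CategoryTheory Opposite

/-- A right `Λ`-module (i.e. left `Λᵐᵒᵖ`-module) `N` is Gorenstein projective if
`Ext^i_{Λᵒᵖ}(N, Λ) = 0` for all `i > 0`. -/
def IsGorensteinProjectiveOp (Λ : Type) [Ring Λ] (N : ModuleCat.{0} Λᵐᵒᵖ) : Prop :=
  ∀ i : ℕ, 0 < i → Limits.IsZero (extSelfOp Λ N i)

open Limits

lemma descend {S : Type*} [Ring S] {X Y Z : Type*} [AddCommGroup X] [Module S X]
    [AddCommGroup Y] [Module S Y] [AddCommGroup Z] [Module S Z]
    (p : X →ₗ[S] Y) (hp : Function.Surjective p) (φ : X →ₗ[S] Z)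
    (h : ∀ x, p x = 0 → φ x = 0) : ∃ ψ : Y →ₗ[S] Z, ∀ x, ψ (p x) = φ x := by
  have hker : LinearMap.ker p ≤ LinearMap.ker φ := fun x hx => h x hx
  refine ⟨(((LinearMap.ker p).liftQ φ hker).comp
    (LinearMap.quotKerEquivOfSurjective p hp).symm.toLinearMap), fun x => ?_⟩
  have h1 : (LinearMap.quotKerEquivOfSurjective p hp).symm (p x) =
      Submodule.Quotient.mk x := by
    apply (LinearMap.quotKerEquivOfSurjective p hp).injective
    rw [LinearEquiv.apply_symm_apply]
    rfl
  simp only [LinearMap.coe_comp, Function.comp_apply, LinearEquiv.coe_toLinearMap, h1]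
  exact Submodule.liftQ_apply _ _ _

universe w
variable {R : Type} [Ring R]

/-- A concrete projective resolution of a module `N`, in `ModuleCat.{0} R`. -/
structure ConcreteRes (N : ModuleCat.{0} R) where
  P : ℕ → ModuleCat.{0} R
  proj : ∀ n, Projective (P n)
  d : ∀ n, P (n + 1) ⟶ P n
  pi : P 0 ⟶ N
  surj : Function.Surjective pi
  dpi : ∀ x, pi (d 0 x) = 0
  dd : ∀ n x, d n (d (n + 1) x) = 0
  ex0 : ∀ x : P 0, pi x = 0 → ∃ y, d 0 y = x
  ex : ∀ n, ∀ x : P (n + 1), d n x = 0 → ∃ y, d (n + 1) y = x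

namespace ConcreteRes

variable {N : ModuleCat.{0} R} (C : ConcreteRes N)

lemma sq (n : ℕ) : C.d (n + 1) ≫ C.d n = 0 := by
  ext x; exact C.dd n x

/-- The chain complex underlying a concrete resolution. -/
noncomputable def cplx : ChainComplex (ModuleCat.{0} R) ℕ :=
  ChainComplex.of C.P C.d C.sq

@[simp] lemma cplx_X (n : ℕ) : C.cplx.X n = C.P n := rfl
@[simp] lemma cplx_d (n : ℕ) : C.cplx.d (n + 1) n = C.d n := ChainComplex.of_d _ _ n

lemma cplx_exactAt_succ (n : ℕ) : C.cplx.ExactAt (n + 1) := by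
  rw [HomologicalComplex.exactAt_iff' _ (n + 2) (n + 1) n (by simp) (by simp)]
  rw [ShortComplex.moduleCat_exact_iff]
  intro x hx
  have hx' : C.d n x = 0 := by
    have := C.cplx_d n
    dsimp [HomologicalComplex.sc', HomologicalComplex.shortComplexFunctor'] at hx
    rwa [C.cplx_d n] at hx
  obtain ⟨y, hy⟩ := C.ex n x hx'
  refine ⟨y, ?_⟩
  dsimp [HomologicalComplex.sc', HomologicalComplex.shortComplexFunctor']
  rw [C.cplx_d (n+1)]
  exact hy

/-- The projective resolution associated to a concrete resolution. -/
noncomputable def pres : ProjectiveResolution N where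
  complex := C.cplx
  projective := C.proj
  π := (ChainComplex.toSingle₀Equiv _ _).symm ⟨C.pi, by
    rw [C.cplx_d 0]; ext x; exact C.dpi x⟩
  quasiIso := ⟨fun n => by
    cases n with
    | zero =>
      rw [ChainComplex.quasiIsoAt₀_iff, ShortComplex.quasiIso_iff_of_zeros']
      · have hdpi : C.d 0 ≫ C.pi = 0 := by ext x; exact C.dpi x
        have e : ShortComplex.mk _ _ ?_ ≅ ShortComplex.mk (C.d 0) C.pi hdpi :=
          ShortComplex.isoMk (Iso.refl _) (Iso.refl _) (Iso.refl _) (by simp) (by simp)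
        · refine (ShortComplex.exact_and_epi_g_iff_of_iso e).2 ⟨?_, ?_⟩
          · rw [ShortComplex.moduleCat_exact_iff]
            intro x hx
            exact C.ex0 x hx
          · rw [ModuleCat.epi_iff_surjective]
            exact C.surj
      all_goals rfl
    | succ n =>
      rw [quasiIsoAt_iff_exactAt']
      · exact C.cplx_exactAt_succ n
      · apply ChainComplex.exactAt_succ_single_obj⟩

end ConcreteRes

namespace ConcreteRes
variable {N : ModuleCat.{0} R} (C : ConcreteRes N) (Y : ModuleCat.{0} R)

lemma isZero_ext_iff (i : ℕ) :
    IsZero (((Ext ℤ (ModuleCat.{0} R) (i + 1)).obj (op N)).obj Y) ↔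
      (∀ g : C.P (i + 1) ⟶ Y, C.d (i + 1) ≫ g = 0 →
        ∃ h : C.P i ⟶ Y, C.d i ≫ h = g) := by
  have e := C.pres.isoExt (R := ℤ) (i + 1) Y
  constructor
  · intro hz
    have hz' : IsZero ((C.cplx.linearYonedaObj ℤ Y).homology (i + 1)) :=
      hz.of_iso e.symm
    rw [← HomologicalComplex.exactAt_iff_isZero_homology] at hz'
    rw [HomologicalComplex.exactAt_iff' _ i (i + 1) (i + 2) (by simp) (by simp)] at hz'
    rw [ShortComplex.moduleCat_exact_iff] at hz'
    intro g hg
    obtain ⟨h, hh⟩ := hz' g (by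
      show (C.cplx.linearYonedaObj ℤ Y).d (i+1) (i+2) g = 0
      rw [ChainComplex.linearYonedaObj_d]
      show C.cplx.d (i+2) (i+1) ≫ g = 0
      rw [C.cplx_d (i+1)]
      exact hg)
    refine ⟨h, ?_⟩
    have : (C.cplx.linearYonedaObj ℤ Y).d i (i+1) h = g := hh
    rw [ChainComplex.linearYonedaObj_d] at this
    have : C.cplx.d (i+1) i ≫ h = g := this
    rwa [C.cplx_d i] at this
  · intro hext
    refine (IsZero.of_iso · e) ?_
    rw [← HomologicalComplex.exactAt_iff_isZero_homology,
      HomologicalComplex.exactAt_iff' _ i (i + 1) (i + 2) (by simp) (by simp),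
      ShortComplex.moduleCat_exact_iff]
    intro g hg
    obtain ⟨h, hh⟩ := hext g (by
      have : (C.cplx.linearYonedaObj ℤ Y).d (i+1) (i+2) g = 0 := hg
      rw [ChainComplex.linearYonedaObj_d] at this
      have : C.cplx.d (i+2) (i+1) ≫ g = 0 := this
      rwa [C.cplx_d (i+1)] at this)
    refine ⟨h, ?_⟩
    show (C.cplx.linearYonedaObj ℤ Y).d i (i+1) h = g
    rw [ChainComplex.linearYonedaObj_d]
    show C.cplx.d (i+1) i ≫ h = g
    rw [C.cplx_d i]
    exact hh

end ConcreteRes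

variable (A : Type) [Ring A]

/-- A package: a finitely generated module. -/
structure ModPkg where
  carrier : Type
  [acg : AddCommGroup carrier]
  [mod : Module A carrier]
  fin : Module.Finite A carrier

attribute [instance] ModPkg.acg ModPkg.mod ModPkg.fin

namespace ModPkg

variable {A}
variable [IsNoetherianRing A]

noncomputable def num (M : ModPkg A) : ℕ := (Module.Finite.exists_fin' A M.carrier).choose

noncomputable def sur (M : ModPkg A) : (Fin M.num → A) →ₗ[A] M.carrier :=
  (Module.Finite.exists_fin' A M.carrier).choose_spec.choose

lemma sur_surj (M : ModPkg A) : Function.Surjective M.sur :=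
  (Module.Finite.exists_fin' A M.carrier).choose_spec.choose_spec

noncomputable def next (M : ModPkg A) : ModPkg A where
  carrier := LinearMap.ker M.sur
  fin := by
    have : IsNoetherian A (Fin M.num → A) := inferInstance
    exact Module.Finite.iff_fg.2 (IsNoetherian.noetherian _)

end ModPkg

section Tower
variable {A} [IsNoetherianRing A]
variable (M₀ : ModPkg A)

/-- The tower of syzygies. -/
noncomputable def tower : ℕ → ModPkg A
  | 0 => M₀
  | (j + 1) => (tower j).next

/-- The free modules in the resolution. -/
noncomputable abbrev FF (j : ℕ) : Type := Fin (tower M₀ j).num → A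

/-- Syzygies. -/
noncomputable abbrev Om (j : ℕ) : Type := (tower M₀ j).carrier

noncomputable def pitow (j : ℕ) : FF M₀ j →ₗ[A] Om M₀ j := (tower M₀ j).sur

lemma pitow_surj (j : ℕ) : Function.Surjective (pitow M₀ j) := (tower M₀ j).sur_surj

/-- The inclusion of the (j+1)-st syzygy into the j-th free module. -/
noncomputable def incl (j : ℕ) : Om M₀ (j + 1) →ₗ[A] FF M₀ j :=
  (LinearMap.ker (pitow M₀ j)).subtype

lemma incl_inj (j : ℕ) : Function.Injective (incl M₀ j) := Subtype.val_injective

lemma pitow_incl (j : ℕ) (x : Om M₀ (j + 1)) : pitow M₀ j (incl M₀ j x) = 0 := x.2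

lemma range_incl (j : ℕ) :
    LinearMap.range (incl M₀ j) = LinearMap.ker (pitow M₀ j) :=
  Submodule.range_subtype _

/-- The differentials. -/
noncomputable def dtow (j : ℕ) : FF M₀ (j + 1) →ₗ[A] FF M₀ j :=
  (incl M₀ j).comp (pitow M₀ (j + 1))

lemma dtow_apply (j : ℕ) (x) : dtow M₀ j x = incl M₀ j (pitow M₀ (j + 1) x) := rfl

lemma ker_dtow (j : ℕ) : LinearMap.ker (dtow M₀ j) = LinearMap.ker (pitow M₀ (j + 1)) := by
  ext x
  simp only [LinearMap.mem_ker]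
  constructor
  · intro h
    exact incl_inj M₀ j (a₁ := pitow M₀ (j+1) x) (a₂ := 0) (by rw [map_zero]; exact h)
  · intro h
    show incl M₀ j (pitow M₀ (j+1) x) = 0
    rw [show pitow M₀ (j+1) x = 0 from h, map_zero]

lemma range_dtow (j : ℕ) :
    LinearMap.range (dtow M₀ j) = LinearMap.ker (pitow M₀ j) := by
  rw [dtow, LinearMap.range_comp, LinearMap.range_eq_top.2 (pitow_surj M₀ (j+1)),
    Submodule.map_top, range_incl]

end Tower

variable {R : Type} [Ring R]

/-- Precomposition as an `Rᵐᵒᵖ`-linear map between duals. -/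
def dm {X X' : Type} [AddCommGroup X] [Module R X] [AddCommGroup X'] [Module R X']
    (φ : X →ₗ[R] X') : (X' →ₗ[R] R) →ₗ[Rᵐᵒᵖ] (X →ₗ[R] R) where
  toFun f := f.comp φ
  map_add' _ _ := rfl
  map_smul' _ _ := rfl

@[simp] lemma dm_apply {X X' : Type} [AddCommGroup X] [Module R X] [AddCommGroup X']
    [Module R X'] (φ : X →ₗ[R] X') (f : X' →ₗ[R] R) (x : X) : dm φ f x = f (φ x) := rfl

lemma expand_lin {n : ℕ} (f : (Fin n → R) →ₗ[R] R) (w : Fin n → R) :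
    f w = ∑ i, w i * f (Pi.single i 1) := by
  conv_lhs => rw [← Finset.univ_sum_single w]
  rw [map_sum]
  congr 1
  ext i
  have h : (Pi.single i (w i) : Fin n → R) = w i • (Pi.single i (1 : R) : Fin n → R) := by
    ext j
    by_cases h : j = i
    · subst h; simp
    · simp [Pi.single_apply, h]
  rw [h, map_smul, smul_eq_mul]

/-- The dual of a finite free module is finite free over the opposite ring. -/
noncomputable def freeDualEquiv (n : ℕ) :
    ((Fin n → R) →ₗ[R] R) ≃ₗ[Rᵐᵒᵖ] (Fin n → Rᵐᵒᵖ) where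
  toFun f i := MulOpposite.op (f (Pi.single i 1))
  map_add' f g := by ext i; simp
  map_smul' a f := by
    funext i
    show MulOpposite.op ((a • f) (Pi.single i 1)) = a • MulOpposite.op (f (Pi.single i 1))
    induction a using MulOpposite.rec' with
    | _ a =>
      rw [LinearMap.smul_apply, op_smul_eq_mul, MulOpposite.op_mul]
      rfl
  invFun g :=
    { toFun := fun v => ∑ i, v i * (g i).unop
      map_add' := fun v w => by
        rw [← Finset.sum_add_distrib]
        exact Finset.sum_congr rfl fun i _ => by rw [Pi.add_apply, add_mul]
      map_smul' := fun a v => by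
        simp only [RingHom.id_apply, Pi.smul_apply, smul_eq_mul, Finset.mul_sum, mul_assoc] }
  left_inv f := by
    refine LinearMap.ext fun v => ?_
    show ∑ i, v i * (MulOpposite.op (f (Pi.single i 1))).unop = f v
    simp only [MulOpposite.unop_op]
    exact (expand_lin f v).symm
  right_inv g := by
    ext i
    simp [Pi.single_apply, Finset.sum_ite_eq']

lemma free_eval_inj {n : ℕ} (v : Fin n → R)
    (h : ∀ f : (Fin n → R) →ₗ[R] R, f v = 0) : v = 0 := by
  funext i
  exact h (LinearMap.proj i)

lemma free_eval_surj {n : ℕ} (ξ : ((Fin n → R) →ₗ[R] R) →ₗ[Rᵐᵒᵖ] R) :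
    ∃ v : Fin n → R, ∀ f : (Fin n → R) →ₗ[R] R, ξ f = f v := by
  refine ⟨fun i => ξ (LinearMap.proj i), fun f => ?_⟩
  have hf : f = ∑ i, (MulOpposite.op (f (Pi.single i 1))) • (LinearMap.proj (R := R) (φ := fun _ : Fin n => R) i) := by
    refine LinearMap.ext fun w => ?_
    rw [LinearMap.sum_apply]
    have : ∀ i, ((MulOpposite.op (f (Pi.single i 1))) •
        (LinearMap.proj (R := R) (φ := fun _ : Fin n => R) i)) w = w i * f (Pi.single i 1) := by
      intro i
      rw [LinearMap.smul_apply, op_smul_eq_mul]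
      rfl
    rw [Finset.sum_congr rfl fun i _ => this i]
    exact expand_lin f w
  conv_lhs => rw [hf]
  rw [map_sum]
  rw [Finset.sum_congr rfl fun i _ => map_smul ξ _ _]
  simp only [op_smul_eq_mul]
  exact (expand_lin f _).symm

section TowerRes
variable {A : Type} [Ring A] [IsNoetherianRing A] (M₀ : ModPkg A)

/-- The concrete free resolution of a finitely generated module over a Noetherian ring. -/
noncomputable def towerRes : ConcreteRes (ModuleCat.of A M₀.carrier) where
  P j := ModuleCat.of A (FF M₀ j)
  proj j := ModuleCat.projective_of_free (Pi.basisFun A (Fin (tower M₀ j).num))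
  d j := ModuleCat.ofHom (dtow M₀ j)
  pi := ModuleCat.ofHom (pitow M₀ 0)
  surj := pitow_surj M₀ 0
  dpi x := pitow_incl M₀ 0 _
  dd n x := by
    show dtow M₀ n (incl M₀ (n+1) (pitow M₀ (n+2) x)) = 0
    rw [dtow_apply, show pitow M₀ (n+1) (incl M₀ (n+1) (pitow M₀ (n+2) x)) = 0 from
      pitow_incl M₀ (n+1) _, map_zero]
  ex0 x hx := by
    have : x ∈ LinearMap.range (dtow M₀ 0) := by rw [range_dtow]; exact hx
    exact this
  ex n x hx := by
    have h1 : x ∈ LinearMap.ker (pitow M₀ (n+1)) := by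
      rw [← ker_dtow]; exact hx
    have : x ∈ LinearMap.range (dtow M₀ (n+1)) := by rw [range_dtow]; exact h1
    exact this

@[simp] lemma towerRes_P (j : ℕ) : (towerRes M₀).P j = ModuleCat.of A (FF M₀ j) := rfl
@[simp] lemma towerRes_d (j : ℕ) : (towerRes M₀).d j = ModuleCat.ofHom (dtow M₀ j) := rfl

end TowerRes

section Splice
variable {S : Type} [Ring S]

/-- Splicing a short exact sequence `0 → A → P0 → B → 0` with `P0` projective onto a
concrete resolution of `A` yields a concrete resolution of `B`. -/
noncomputable def splice {A B P0 : ModuleCat.{0} S} (Res : ConcreteRes A)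
    (hP0 : Projective P0) (ι : A ⟶ P0) (ρ : P0 ⟶ B)
    (hι : Function.Injective ι) (hρ : Function.Surjective ρ)
    (hexact : ∀ x, ρ x = 0 → ∃ a, ι a = x) (hcomp : ∀ a, ρ (ι a) = 0) :
    ConcreteRes B where
  P n := match n with
    | 0 => P0
    | (n + 1) => Res.P n
  proj n := match n with
    | 0 => hP0
    | (n + 1) => Res.proj n
  d n := match n with
    | 0 => Res.pi ≫ ι
    | (n + 1) => Res.d n
  pi := ρ
  surj := hρ
  dpi x := hcomp _
  dd n x := by
    match n with
    | 0 =>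
      show ι (Res.pi (Res.d 0 x)) = 0
      rw [show Res.pi (Res.d 0 x) = 0 from Res.dpi x, map_zero]
    | (n + 1) => exact Res.dd n x
  ex0 x hx := by
    obtain ⟨a, ha⟩ := hexact x hx
    obtain ⟨y, hy⟩ := Res.surj a
    exact ⟨y, by show ι (Res.pi y) = x; rw [hy, ha]⟩
  ex n x hx := by
    match n with
    | 0 =>
      have h1 : Res.pi x = 0 := hι (by simpa using hx)
      exact Res.ex0 x h1
    | (n + 1) => exact Res.ex n x hx

end Splice

section MainDev

variable {Λ : Type} [Ring Λ] [IsNoetherianRing Λ]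

/-- The dual of the `j`-th syzygy, a right module. -/
noncomputable abbrev DOm (M₀ : ModPkg Λ) (j : ℕ) : Type := Om M₀ j →ₗ[Λ] Λ

/-- The dual of the `j`-th free module, a right module. -/
noncomputable abbrev DFF (M₀ : ModPkg Λ) (j : ℕ) : Type := FF M₀ j →ₗ[Λ] Λ

variable (M₀ : ModPkg Λ)

lemma dFF_finite (j : ℕ) : Module.Finite Λᵐᵒᵖ (DFF M₀ j) :=
  Module.Finite.equiv (freeDualEquiv _).symm

lemma dm_pitow_inj (j : ℕ) : Function.Injective (dm (R := Λ) (pitow M₀ j)) := by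
  intro f g h
  refine LinearMap.ext fun a => ?_
  obtain ⟨x, rfl⟩ := pitow_surj M₀ j a
  exact LinearMap.congr_fun h x

lemma dOm_finite [IsNoetherianRing Λᵐᵒᵖ] (j : ℕ) : Module.Finite Λᵐᵒᵖ (DOm M₀ j) := by
  haveI := dFF_finite M₀ j
  haveI : IsNoetherian Λᵐᵒᵖ (DFF M₀ j) := isNoetherian_of_isNoetherianRing_of_finite Λᵐᵒᵖ _
  exact Module.Finite.of_injective (dm (pitow M₀ j)) (dm_pitow_inj M₀ j)

/-- The packaged dual syzygy. -/
noncomputable def pkgD [IsNoetherianRing Λᵐᵒᵖ] (j : ℕ) : ModPkg Λᵐᵒᵖ :=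
  { carrier := DOm M₀ j, fin := dOm_finite M₀ j }

lemma projDFF (j : ℕ) : Projective (ModuleCat.of Λᵐᵒᵖ (DFF M₀ j)) :=
  ModuleCat.projective_of_free ((Pi.basisFun Λᵐᵒᵖ (Fin _)).map (freeDualEquiv _).symm)

/-- Exactness of the dualized resolution, from Gorenstein projectivity. -/
lemma hGP_dualext (hGP : IsGorensteinProjective Λ (ModuleCat.of Λ M₀.carrier)) (i : ℕ) :
    ∀ g : FF M₀ (i+1) →ₗ[Λ] Λ, g.comp (dtow M₀ (i+1)) = 0 →
      ∃ h : FF M₀ i →ₗ[Λ] Λ, h.comp (dtow M₀ i) = g := by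
  have h := ((towerRes M₀).isZero_ext_iff (ModuleCat.of Λ Λ) i).1 (hGP (i+1) (Nat.succ_pos i))
  intro g hg
  obtain ⟨h', hh'⟩ := h (ModuleCat.ofHom g) (by ext x; exact LinearMap.congr_fun hg x)
  exact ⟨h'.hom, by refine LinearMap.ext fun x => ?_; exact congrArg (fun k => k.hom x) hh'⟩

lemma restr_surj (hGP : IsGorensteinProjective Λ (ModuleCat.of Λ M₀.carrier)) (j : ℕ)
    (f : DOm M₀ (j+1)) : ∃ h : DFF M₀ j, h.comp (incl M₀ j) = f := by
  obtain ⟨h, hh⟩ := hGP_dualext M₀ hGP j (f.comp (pitow M₀ (j+1))) (by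
    refine LinearMap.ext fun x => ?_
    show f (pitow M₀ (j+1) (dtow M₀ (j+1) x)) = 0
    rw [dtow_apply, pitow_incl, map_zero])
  refine ⟨h, LinearMap.ext fun a => ?_⟩
  obtain ⟨x, rfl⟩ := pitow_surj M₀ (j+1) a
  exact LinearMap.congr_fun hh x

lemma factor_through (j : ℕ) (f : DFF M₀ j) (hf : f.comp (incl M₀ j) = 0) :
    ∃ u : DOm M₀ j, u.comp (pitow M₀ j) = f := by
  obtain ⟨u, hu⟩ := descend (pitow M₀ j) (pitow_surj M₀ j) f (fun x hx => by
    have hx' : x ∈ LinearMap.range (incl M₀ j) := by rw [range_incl]; exact hx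
    obtain ⟨y, rfl⟩ := hx'
    exact LinearMap.congr_fun hf y)
  exact ⟨u, LinearMap.ext hu⟩

variable [IsNoetherianRing Λᵐᵒᵖ]

/-- The chosen free resolution of the dual of the `j`-th syzygy. -/
noncomputable def RR (j : ℕ) : ConcreteRes (ModuleCat.of Λᵐᵒᵖ (DOm M₀ j)) :=
  towerRes (pkgD M₀ j)

/-- The spliced resolution of the dual of the `(j+1)`-st syzygy. -/
noncomputable def spliceRes (hGP : IsGorensteinProjective Λ (ModuleCat.of Λ M₀.carrier))
    (j : ℕ) : ConcreteRes (ModuleCat.of Λᵐᵒᵖ (DOm M₀ (j+1))) :=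
  splice (P0 := ModuleCat.of Λᵐᵒᵖ (DFF M₀ j)) (RR M₀ j) (projDFF M₀ j)
    (ModuleCat.ofHom (dm (pitow M₀ j))) (ModuleCat.ofHom (dm (incl M₀ j))) (dm_pitow_inj M₀ j)
    (fun f => by
      obtain ⟨h, hh⟩ := restr_surj M₀ hGP j f
      exact ⟨h, hh⟩)
    (fun f hf => by
      obtain ⟨u, hu⟩ := factor_through M₀ j f hf
      exact ⟨u, hu⟩)
    (fun u => by
      refine LinearMap.ext fun a => ?_
      show (show DOm M₀ j from u) (pitow M₀ j (incl M₀ j a)) = 0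
      rw [pitow_incl, map_zero])

lemma shift (hGP : IsGorensteinProjective Λ (ModuleCat.of Λ M₀.carrier)) (j i : ℕ) :
    IsZero (extSelfOp Λ (ModuleCat.of Λᵐᵒᵖ (DOm M₀ (j+1))) (i+2)) ↔
      IsZero (extSelfOp Λ (ModuleCat.of Λᵐᵒᵖ (DOm M₀ j)) (i+1)) := by
  constructor
  · intro h
    have h1 := ((spliceRes M₀ hGP j).isZero_ext_iff (ModuleCat.of Λᵐᵒᵖ Λ) (i+1)).1 h
    exact ((RR M₀ j).isZero_ext_iff (ModuleCat.of Λᵐᵒᵖ Λ) i).2 h1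
  · intro h
    have h1 := ((RR M₀ j).isZero_ext_iff (ModuleCat.of Λᵐᵒᵖ Λ) i).1 h
    exact ((spliceRes M₀ hGP j).isZero_ext_iff (ModuleCat.of Λᵐᵒᵖ Λ) (i+1)).2 h1

lemma chain (hGP : IsGorensteinProjective Λ (ModuleCat.of Λ M₀.carrier)) (j i k : ℕ) :
    IsZero (extSelfOp Λ (ModuleCat.of Λᵐᵒᵖ (DOm M₀ j)) (i+1)) ↔
      IsZero (extSelfOp Λ (ModuleCat.of Λᵐᵒᵖ (DOm M₀ (j+k))) (i+1+k)) := by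
  induction k with
  | zero => rfl
  | succ k ih =>
    rw [Nat.add_succ j k, Nat.add_succ (i+1) k]
    refine ih.trans ?_
    rw [Nat.add_right_comm i 1 k]
    exact (shift M₀ hGP (j+k) (i+k)).symm

lemma vanish {d : ℕ} (hΛ : IsIwanagaGorenstein Λ d)
    (hGP : IsGorensteinProjective Λ (ModuleCat.of Λ M₀.carrier)) (j i : ℕ) :
    IsZero (extSelfOp Λ (ModuleCat.of Λᵐᵒᵖ (DOm M₀ j)) (i+1)) := by
  refine (chain M₀ hGP j i d).2 ?_
  exact hΛ.2.2.2 (ModuleCat.of Λᵐᵒᵖ (DOm M₀ (j+d))) (dOm_finite M₀ (j+d)) (i+1+d)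
    (by omega)

lemma extend {d : ℕ} (hΛ : IsIwanagaGorenstein Λ d)
    (hGP : IsGorensteinProjective Λ (ModuleCat.of Λ M₀.carrier)) (j : ℕ)
    (ξ : DOm M₀ j →ₗ[Λᵐᵒᵖ] Λ) :
    ∃ η : DFF M₀ j →ₗ[Λᵐᵒᵖ] Λ, ∀ u : DOm M₀ j, η (u.comp (pitow M₀ j)) = ξ u := by
  have h := ((spliceRes M₀ hGP j).isZero_ext_iff (ModuleCat.of Λᵐᵒᵖ Λ) 0).1
    (vanish M₀ hΛ hGP (j+1) 0)
  obtain ⟨η, hη⟩ := h (ModuleCat.ofHom (ξ.comp (RR M₀ j).pi.hom)) (by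
    ext x
    show ξ ((RR M₀ j).pi ((RR M₀ j).d 0 x)) = 0
    rw [show (RR M₀ j).pi ((RR M₀ j).d 0 x) = 0 from (RR M₀ j).dpi x, map_zero])
  refine ⟨η.hom, fun u => ?_⟩
  obtain ⟨x, hx⟩ := (RR M₀ j).surj u
  have := congrArg (fun k => k.hom x) hη
  rw [← hx]
  exact this

lemma ev_surj {d : ℕ} (hΛ : IsIwanagaGorenstein Λ d)
    (hGP : IsGorensteinProjective Λ (ModuleCat.of Λ M₀.carrier)) (j : ℕ)
    (ξ : DOm M₀ j →ₗ[Λᵐᵒᵖ] Λ) : ∃ m : Om M₀ j, ∀ f : DOm M₀ j, ξ f = f m := by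
  obtain ⟨η, hη⟩ := extend M₀ hΛ hGP j ξ
  obtain ⟨v, hv⟩ := free_eval_surj η
  refine ⟨pitow M₀ j v, fun f => ?_⟩
  rw [← hη f, hv]
  rfl

lemma ev_inj {d : ℕ} (hΛ : IsIwanagaGorenstein Λ d)
    (hGP : IsGorensteinProjective Λ (ModuleCat.of Λ M₀.carrier)) (j : ℕ)
    (m : Om M₀ j) (hm : ∀ f : DOm M₀ j, f m = 0) : m = 0 := by
  obtain ⟨x, hx⟩ := pitow_surj M₀ j m
  have hsur : Function.Surjective (dm (R := Λ) (incl M₀ j)) := fun f => by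
    obtain ⟨h, hh⟩ := restr_surj M₀ hGP j f
    exact ⟨h, hh⟩
  obtain ⟨ζ, hζ⟩ := descend (dm (R := Λ) (incl M₀ j)) hsur
    ({ toFun := fun f : DFF M₀ j => f x
       map_add' := fun _ _ => rfl
       map_smul' := fun _ _ => rfl } : DFF M₀ j →ₗ[Λᵐᵒᵖ] Λ)
    (fun f hf => by
      obtain ⟨u, hu⟩ := factor_through M₀ j f hf
      show f x = 0
      rw [← hu]
      show u (pitow M₀ j x) = 0
      rw [hx]
      exact hm u)
  obtain ⟨ω, hω⟩ := ev_surj M₀ hΛ hGP (j+1) ζ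
  have hxω : x = incl M₀ j ω := by
    have h0 : x - incl M₀ j ω = 0 := by
      refine free_eval_inj _ fun f => ?_
      rw [map_sub]
      have h1 : f x = f (incl M₀ j ω) := by
        have h2 := hζ f
        rw [hω (dm (incl M₀ j) f)] at h2
        exact h2.symm
      rw [h1, sub_self]
    have := sub_eq_zero.1 h0
    exact this
  rw [← hx, hxω, pitow_incl]

end MainDev

/-- Over an Iwanaga–Gorenstein ring, the dual `M* = Hom_Λ(M, Λ)` of a finitely generated
Gorenstein projective left module `M` is a finitely generated Gorenstein projective right
module, and the evaluation map `M → Hom_{Λᵒᵖ}(M*, Λ)` is bijective. -/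
theorem dual_gorensteinProjective
    (Λ : Type) [Ring Λ] (d : ℕ) (hΛ : IsIwanagaGorenstein Λ d)
    (M : ModuleCat.{0} Λ) (hfg : Module.Finite Λ M) (hGP : IsGorensteinProjective Λ M) :
    Module.Finite Λᵐᵒᵖ (M →ₗ[Λ] Λ) ∧
    IsGorensteinProjectiveOp Λ (ModuleCat.of Λᵐᵒᵖ (M →ₗ[Λ] Λ)) ∧
    Function.Bijective (fun m : M =>
      ({ toFun := fun f : M →ₗ[Λ] Λ => f m
         map_add' := fun _ _ => rfl
         map_smul' := fun _ _ => rfl } : (M →ₗ[Λ] Λ) →ₗ[Λᵐᵒᵖ] Λ)) := by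
  haveI : IsNoetherianRing Λ := hΛ.1
  haveI : IsNoetherianRing Λᵐᵒᵖ := hΛ.2.1
  set M₀ : ModPkg Λ := { carrier := M, fin := hfg } with hM₀
  have hGP' : IsGorensteinProjective Λ (ModuleCat.of Λ M₀.carrier) := hGP
  refine ⟨?_, ?_, ?_, ?_⟩
  · exact dOm_finite M₀ 0
  · intro i hi
    obtain ⟨i', rfl⟩ : ∃ i', i = i' + 1 := ⟨i - 1, by omega⟩
    exact vanish M₀ hΛ hGP' 0 i'
  · intro a b hab
    have h : ∀ f : DOm M₀ 0, f (a - b) = 0 := by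
      intro f
      have := LinearMap.congr_fun hab f
      refine (map_sub f a b).trans ?_
      exact sub_eq_zero.2 this
    have := ev_inj M₀ hΛ hGP' 0 (a - b) h
    exact sub_eq_zero.1 this
  · intro ξ
    obtain ⟨m, hm⟩ := ev_surj M₀ hΛ hGP' 0 ξ
    exact ⟨m, LinearMap.ext fun f => (hm f).symm⟩
end

section
/- Let (S, n) be a commutative Noetherian local ring which is complete with respect to the n-adic topology, let R be an S-algebra that is finitely generated as an S-module, and let M be a finitely generated R-module having no nonzero projective direct summand (every direct summand of M that is a projective R-module is the zero module). If f : M → M is an R-linear endomorphism that factors through a projective R-module (i.e., there exist a projective R-module P and R-linear maps g : M → P and h : P → M with f = h ∘ g), then f lies in the Jacobson radical of the endomorphism ring End_R(M); concretely, for every R-linear endomorphism g of M, the endomorphism id_M − g ∘ f is an automorphism of M. -/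
set_option maxHeartbeats 1000000
set_option linter.unusedSectionVars false
set_option linter.unusedTactic false
section helpers


section aux2
variable {S E : Type*} [CommRing S] [IsLocalRing S] [Ring E] [Algebra S E] [Module.Finite S E]

local notation "n" => IsLocalRing.maximalIdeal S

lemma aux_exists_right_inv {x : E} (hx : 1 - x ∈ n • (⊤ : Submodule S E)) :
    ∃ y : E, x * y = 1 := by
  set T : Submodule S E := LinearMap.range (LinearMap.mulLeft S x) with hT
  have htop : ∀ y : E, ∃ a ∈ T, ∃ b ∈ (n • ⊤ : Submodule S E), a + b = y := by
    intro y
    refine ⟨x * y, ⟨y, rfl⟩, (1 - x) * y, ?_, by noncomm_ring⟩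
    refine Submodule.smul_induction_on hx (fun s hs z _ => ?_) (fun a b ha hb => ?_)
    · rw [smul_mul_assoc]; exact Submodule.smul_mem_smul hs trivial
    · rw [add_mul]; exact Submodule.add_mem _ ha hb
  have hQ : (⊤ : Submodule S (E ⧸ T)) ≤ n • ⊤ := by
    intro z _
    obtain ⟨y, rfl⟩ := T.mkQ_surjective z
    obtain ⟨a, ha, b, hb, hab⟩ := htop y
    have ha0 : T.mkQ a = 0 := by
      rw [Submodule.mkQ_apply, Submodule.Quotient.mk_eq_zero]; exact ha
    have hyb : T.mkQ y = T.mkQ b := by rw [← hab, map_add, ha0, zero_add]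
    rw [hyb]
    refine Submodule.smul_mono le_rfl (le_top : Submodule.map T.mkQ ⊤ ≤ ⊤) ?_
    rw [← Submodule.map_smul'']
    exact Submodule.mem_map_of_mem hb
  have hbot : (⊤ : Submodule S (E ⧸ T)) = ⊥ := by
    refine Submodule.eq_bot_of_le_smul_of_le_jacobson_bot n ⊤ Module.Finite.fg_top hQ ?_
    rw [IsLocalRing.jacobson_eq_maximalIdeal (⊥ : Ideal S) bot_ne_top]
  have hTtop : T = ⊤ := by
    rw [Submodule.eq_top_iff']
    intro y
    have h0 : T.mkQ y = 0 := by
      have hy : T.mkQ y ∈ (⊤ : Submodule S (E ⧸ T)) := trivial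
      rw [hbot] at hy; exact hy
    rwa [Submodule.mkQ_apply, Submodule.Quotient.mk_eq_zero] at h0
  have h1 : (1 : E) ∈ T := hTtop ▸ trivial
  obtain ⟨y, hy⟩ := h1
  exact ⟨y, hy⟩

lemma aux_isUnit_of_isUnit_map {F : Type*} [Ring F] (π : E →+* F)
    (hker : ∀ z : E, π z = 0 → z ∈ n • (⊤ : Submodule S E))
    (hsurj : Function.Surjective π) {x : E} (hx : IsUnit (π x)) : IsUnit x := by
  have key : ∀ w : E, IsUnit (π w) → ∃ y : E, w * y = 1 ∧ IsUnit (π y) := by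
    intro w hw
    obtain ⟨u, hu⟩ := hw
    obtain ⟨y₀, hy₀⟩ := hsurj (↑u⁻¹ : F)
    have h1 : π (1 - w * y₀) = 0 := by
      rw [map_sub, map_one, map_mul, hy₀, ← hu, Units.mul_inv, sub_self]
    obtain ⟨z, hz⟩ := aux_exists_right_inv (hker _ h1)
    refine ⟨y₀ * z, by rw [← mul_assoc, hz], ?_⟩
    have hz' : π w * π (y₀ * z) = 1 := by
      rw [← map_mul, ← mul_assoc, hz, map_one]
    have : π (y₀ * z) = ↑u⁻¹ := by
      have := congrArg (fun t => (↑u⁻¹ : F) * t) hz'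
      simpa [← hu, ← mul_assoc] using this
    rw [this]; exact u⁻¹.isUnit
  obtain ⟨r, hr, hru⟩ := key x hx
  obtain ⟨r', hr', _⟩ := key r hru
  have hxr' : x = r' := by
    calc x = x * (r * r') := by rw [hr', mul_one]
      _ = (x * r) * r' := by rw [mul_assoc]
      _ = r' := by rw [hr, one_mul]
  have hrx : r * x = 1 := by rw [hxr']; exact hr'
  exact ⟨⟨x, r, hr, hrx⟩, rfl⟩

end aux2


section aux3
variable {S : Type*} [CommRing S] (I : Ideal S)

-- precompleteness for finite products
lemma aux_isPrecomplete_pi (κ : ℕ) [IsPrecomplete I S] :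
    IsPrecomplete I (Fin κ → S) := by
  constructor
  intro f hf
  -- each coordinate is Cauchy
  have hcoord : ∀ i : Fin κ, ∀ {m n : ℕ}, m ≤ n →
      f m i ≡ f n i [SMOD (I ^ m • ⊤ : Submodule S S)] := by
    intro i m n hmn
    have := hf hmn
    rw [SModEq.sub_mem] at this ⊢
    have hmap := Submodule.mem_map_of_mem (f := LinearMap.proj (R := S) (φ := fun _ : Fin κ => S) i) this
    rw [Submodule.map_smul''] at hmap
    exact Submodule.smul_mono le_rfl le_top hmap
  choose L hL using fun i : Fin κ =>
    IsPrecomplete.prec ‹IsPrecomplete I S› (f := fun m => f m i) (fun {m n} h => hcoord i h)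
  refine ⟨L, fun m => ?_⟩
  rw [SModEq.sub_mem]
  have : f m - L = ∑ i : Fin κ, Pi.single i (f m i - L i) := by
    ext j
    rw [Finset.sum_apply]
    simp [Pi.single_apply]
  rw [this]
  refine Submodule.sum_mem _ fun i _ => ?_
  have hi : f m i - L i ∈ (I ^ m • ⊤ : Submodule S S) := (SModEq.sub_mem).1 (hL i m)
  have hmap := Submodule.mem_map_of_mem
    (f := LinearMap.single S (fun _ : Fin κ => S) i) hi
  rw [Submodule.map_smul''] at hmap
  exact Submodule.smul_mono le_rfl le_top hmap

-- precompleteness passes to surjective images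
lemma aux_isPrecomplete_of_surjective {M N : Type*} [AddCommGroup M] [Module S M]
    [AddCommGroup N] [Module S N] (π : M →ₗ[S] N) (hπ : Function.Surjective π)
    [IsPrecomplete I M] : IsPrecomplete I N := by
  constructor
  intro f hf
  have hmap : ∀ m : ℕ, Submodule.map π (I ^ m • ⊤ : Submodule S M) = (I ^ m • ⊤ : Submodule S N) := by
    intro m
    rw [Submodule.map_smul'', Submodule.map_top, LinearMap.range_eq_top.2 hπ]
  have hd : ∀ m : ℕ, ∃ d : M, d ∈ (I ^ m • ⊤ : Submodule S M) ∧ π d = f (m + 1) - f m := by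
    intro m
    have : f (m + 1) - f m ∈ (I ^ m • ⊤ : Submodule S N) := by
      have := hf (Nat.le_succ m)
      rw [SModEq.sub_mem] at this
      simpa using (Submodule.neg_mem _ this)
    rw [← hmap m] at this
    obtain ⟨d, hd1, hd2⟩ := this
    exact ⟨d, hd1, hd2⟩
  -- build lift
  let g : ℕ → M := fun m => Nat.rec ((hπ (f 0)).choose) (fun m gm => gm + (hd m).choose) m
  have hg0 : ∀ m, π (g m) = f m := by
    intro m
    induction m with
    | zero => exact (hπ (f 0)).choose_spec
    | succ m ih =>
      show π (g m + (hd m).choose) = f (m + 1)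
      rw [map_add, ih, (hd m).choose_spec.2]
      abel
  have hgstep : ∀ m, g (m + 1) - g m ∈ (I ^ m • ⊤ : Submodule S M) := by
    intro m
    show g m + (hd m).choose - g m ∈ _
    simpa using (hd m).choose_spec.1
  have hgc : ∀ {a b : ℕ}, a ≤ b → g a ≡ g b [SMOD (I ^ a • ⊤ : Submodule S M)] := by
    intro a b hab
    rw [SModEq.sub_mem]
    induction b with
    | zero =>
      have : a = 0 := Nat.le_zero.1 hab
      subst this; simp
    | succ b ih =>
      rcases Nat.lt_or_ge a (b + 1) with h | h
      · have hab' : a ≤ b := Nat.lt_succ_iff.1 h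
        have h1 := ih hab'
        have h2 : g (b+1) - g b ∈ (I ^ a • ⊤ : Submodule S M) :=
          Submodule.smul_mono (Ideal.pow_le_pow_right hab') le_rfl (hgstep b)
        have heq : g a - g (b+1) = (g a - g b) - (g (b+1) - g b) := by abel
        rw [heq]
        exact Submodule.sub_mem _ h1 h2
      · have : a = b + 1 := le_antisymm hab h
        subst this; simp
  obtain ⟨L', hL'⟩ := IsPrecomplete.prec ‹IsPrecomplete I M› (f := g) hgc
  refine ⟨π L', fun m => ?_⟩
  rw [SModEq.sub_mem]
  have : f m - π L' = π (g m - L') := by rw [map_sub, hg0]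
  rw [this, ← hmap m]
  exact Submodule.mem_map_of_mem ((SModEq.sub_mem).1 (hL' m))

end aux3


section aux4
universe u
variable {S E : Type u} [CommRing S] [IsNoetherianRing S] [IsLocalRing S]
  [Ring E] [Algebra S E] [Module.Finite S E]

local notation "n" => IsLocalRing.maximalIdeal S

-- restatements of t1 lemmas (assumed available in final file)
lemma aux_mul_right_mem' {I : Ideal S} {x : E} (hx : x ∈ I • (⊤ : Submodule S E)) (y : E) :
    x * y ∈ I • (⊤ : Submodule S E) := by
  refine Submodule.smul_induction_on hx (fun s hs z _ => ?_) (fun a b ha hb => ?_)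
  · rw [smul_mul_assoc]; exact Submodule.smul_mem_smul hs trivial
  · rw [add_mul]; exact Submodule.add_mem _ ha hb

lemma aux_mul_left_mem' {I : Ideal S} {x : E} (hx : x ∈ I • (⊤ : Submodule S E)) (y : E) :
    y * x ∈ I • (⊤ : Submodule S E) := by
  refine Submodule.smul_induction_on hx (fun s hs z _ => ?_) (fun a b ha hb => ?_)
  · rw [mul_smul_comm]; exact Submodule.smul_mem_smul hs trivial
  · rw [mul_add]; exact Submodule.add_mem _ ha hb

lemma aux_mul_mem' {I J : Ideal S} {x y : E} (hx : x ∈ I • (⊤ : Submodule S E))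
    (hy : y ∈ J • (⊤ : Submodule S E)) : x * y ∈ (I * J) • (⊤ : Submodule S E) := by
  refine Submodule.smul_induction_on hx (fun s hs z _ => ?_) (fun a b ha hb => ?_)
  · refine Submodule.smul_induction_on hy (fun t ht w _ => ?_) (fun a b ha hb => ?_)
    · rw [smul_mul_assoc, mul_smul_comm, smul_smul]
      exact Submodule.smul_mem_smul (Ideal.mul_mem_mul hs ht) trivial
    · rw [mul_add]; exact Submodule.add_mem _ ha hb
  · rw [add_mul]; exact Submodule.add_mem _ ha hb

open Polynomial in
lemma aux_lift_idempotent [IsPrecomplete (IsLocalRing.maximalIdeal S) E]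
    (a : E) (ha : a * a - a ∈ n • (⊤ : Submodule S E)) :
    ∃ e : E, e * e = e ∧ e - a ∈ n • (⊤ : Submodule S E) := by
  classical
  let q : ℕ → Polynomial ℤ := fun m => Nat.rec X (fun _ p => 3 * p ^ 2 - 2 * p ^ 3) m
  have hqsucc : ∀ m, q (m + 1) = 3 * (q m) ^ 2 - 2 * (q m) ^ 3 := fun m => rfl
  let A : ℕ → E := fun m => Polynomial.aeval a (q m)
  have hA0 : A 0 = a := by simp [A, q]
  have hD : ∀ m, A m * A m - A m ∈ (n ^ (m + 1) • ⊤ : Submodule S E) := by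
    intro m
    induction m with
    | zero =>
      have hq0 : q 0 = X := rfl
      show A 0 * A 0 - A 0 ∈ _
      rw [hA0, pow_one]
      exact ha
    | succ m ih =>
      have hid : q (m+1) * q (m+1) - q (m+1) =
          ((q m * q m - q m) * (q m * q m - q m)) * (4 * (q m * q m - q m) - 3) := by
        rw [hqsucc]; ring
      have : A (m+1) * A (m+1) - A (m+1) =
          ((A m * A m - A m) * (A m * A m - A m)) *
            (Polynomial.aeval a (4 * (q m * q m - q m) - 3)) := by
        have := congrArg (Polynomial.aeval a) hid
        simpa [A, map_mul, map_sub] using this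
      rw [this]
      have h2 : (A m * A m - A m) * (A m * A m - A m) ∈
          ((n ^ (m+1) * n ^ (m+1)) • ⊤ : Submodule S E) := aux_mul_mem' ih ih
      have hle : ((n ^ (m+1) * n ^ (m+1) : Ideal S) • ⊤ : Submodule S E) ≤ n ^ (m+2) • ⊤ := by
        refine Submodule.smul_mono ?_ le_rfl
        rw [← pow_add]
        exact Ideal.pow_le_pow_right (by omega)
      exact aux_mul_right_mem' (hle h2) _
  have hstep : ∀ m, A (m + 1) - A m ∈ (n ^ (m + 1) • ⊤ : Submodule S E) := by
    intro m
    have hid : q (m+1) - q m = (q m * q m - q m) * (1 - 2 * q m) := by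
      rw [hqsucc]; ring
    have : A (m+1) - A m = (A m * A m - A m) * (Polynomial.aeval a (1 - 2 * q m)) := by
      have := congrArg (Polynomial.aeval a) hid
      simpa [A, map_mul, map_sub] using this
    rw [this]
    exact aux_mul_right_mem' (hD m) _
  have hcauchy : ∀ {c d : ℕ}, c ≤ d → A c ≡ A d [SMOD ((n : Ideal S) ^ c • ⊤ : Submodule S E)] := by
    intro c d hcd
    rw [SModEq.sub_mem]
    induction d with
    | zero => have : c = 0 := Nat.le_zero.1 hcd; subst this; simp
    | succ d ih =>
      rcases Nat.lt_or_ge c (d + 1) with h | h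
      · have hcd' : c ≤ d := Nat.lt_succ_iff.1 h
        have h1 := ih hcd'
        have h2 : A (d+1) - A d ∈ ((n : Ideal S) ^ c • ⊤ : Submodule S E) :=
          Submodule.smul_mono (Ideal.pow_le_pow_right (by omega)) le_rfl (hstep d)
        have heq : A c - A (d+1) = (A c - A d) - (A (d+1) - A d) := by abel
        rw [heq]; exact Submodule.sub_mem _ h1 h2
      · have : c = d + 1 := le_antisymm hcd h
        subst this; simp
  obtain ⟨e, he⟩ := IsPrecomplete.prec ‹IsPrecomplete (IsLocalRing.maximalIdeal S) E›
    (f := A) hcauchy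
  have hLm : ∀ m, A m - e ∈ ((n : Ideal S) ^ m • ⊤ : Submodule S E) :=
    fun m => (SModEq.sub_mem).1 (he m)
  have hKrull : (⨅ i : ℕ, (n : Ideal S) ^ i • ⊤ : Submodule S E) = ⊥ :=
    (IsLocalRing.maximalIdeal S).iInf_pow_smul_eq_bot_of_isLocalRing (M := E)
      (Ideal.IsMaximal.ne_top (IsLocalRing.maximalIdeal.isMaximal S))
  refine ⟨e, ?_, ?_⟩
  · have hmem : ∀ m : ℕ, e * e - e ∈ ((n : Ideal S) ^ m • ⊤ : Submodule S E) := by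
      intro m
      have h1 : e * e - A m * A m = e * (e - A m) + (e - A m) * A m := by noncomm_ring
      have h2 : e * e - e = (e * e - A m * A m) + (A m * A m - A m) + (A m - e) := by abel
      have h3 : e - A m ∈ ((n : Ideal S) ^ m • ⊤ : Submodule S E) := by
        have := Submodule.neg_mem _ (hLm m); simpa using this
      rw [h2]
      refine Submodule.add_mem _ (Submodule.add_mem _ ?_ ?_) (hLm m)
      · rw [h1]
        exact Submodule.add_mem _ (aux_mul_left_mem' h3 e) (aux_mul_right_mem' h3 (A m))
      · exact Submodule.smul_mono (Ideal.pow_le_pow_right (by omega)) le_rfl (hD m)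
    have hinf : e * e - e ∈ (⨅ i : ℕ, (n : Ideal S) ^ i • ⊤ : Submodule S E) :=
      Submodule.mem_iInf _ |>.2 hmem
    rw [hKrull] at hinf
    exact sub_eq_zero.1 (Submodule.mem_bot _ |>.1 hinf)
  · have h1 : e - A 1 ∈ ((n : Ideal S) ^ 1 • ⊤ : Submodule S E) := by
      have := Submodule.neg_mem _ (hLm 1); simpa using this
    have h2 : A 1 - a ∈ ((n : Ideal S) ^ 1 • ⊤ : Submodule S E) := by
      have := hstep 0; rwa [hA0] at this
    have h3 : e - a = (e - A 1) + (A 1 - a) := by abel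
    have := Submodule.add_mem _ h1 h2
    rw [← h3, pow_one] at this
    exact this

end aux4


section aux5
variable {A : Type*} [Ring A]

open LinearMap

lemma aux_brauer [IsArtinian A A] [IsNoetherian A A] {b : A} (hb : ¬ IsNilpotent b) :
    ∃ ε z : A, ε ≠ 0 ∧ ε * ε = ε ∧ ε = z * b := by
  classical
  set φ : A →ₗ[A] A := LinearMap.toSpanSingleton A A b with hφ
  have hφpow : ∀ (m : ℕ) (c : A), (φ ^ m) c = c * b ^ m := by
    intro m
    induction m with
    | zero => intro c; simp
    | succ m ih =>
      intro c
      rw [pow_succ', Module.End.mul_apply, ih, hφ, LinearMap.toSpanSingleton_apply,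
        smul_eq_mul, mul_assoc, ← pow_succ]
  obtain ⟨nn, hn, hn1⟩ : ∃ nn, IsCompl (ker (φ ^ nn)) (range (φ ^ nn)) ∧ 1 ≤ nn := by
    have h := φ.eventually_isCompl_ker_pow_range_pow.and (Filter.eventually_ge_atTop 1)
    obtain ⟨nn, h1, h2⟩ := h.exists
    exact ⟨nn, h1, h2⟩
  have hbn : b ^ nn ≠ 0 := fun h => hb ⟨nn, h⟩
  -- decompose 1
  have h1mem : (1 : A) ∈ ker (φ ^ nn) ⊔ range (φ ^ nn) := by
    rw [hn.sup_eq_top]; trivial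
  obtain ⟨ε', hε', ε, hε, hsum⟩ := Submodule.mem_sup.1 h1mem
  -- for a in range, a * ε = a
  have key : ∀ a : A, a ∈ range (φ ^ nn) → a * ε = a := by
    intro a ha
    obtain ⟨c, hc⟩ := hε
    obtain ⟨ca, hca⟩ := ha
    have haε : a * ε ∈ range (φ ^ nn) := by
      refine ⟨a * c, ?_⟩
      rw [hφpow] at hc ⊢
      rw [mul_assoc, hc]
    have haε' : a * ε' ∈ ker (φ ^ nn) := by
      rw [mem_ker, hφpow]
      have : ε' * b ^ nn = 0 := by
        have := hε'; rwa [mem_ker, hφpow] at this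
      rw [mul_assoc, this, mul_zero]
    have hdiff : a - a * ε ∈ range (φ ^ nn) := Submodule.sub_mem _ ⟨ca, hca⟩ haε
    have hdiff' : a - a * ε ∈ ker (φ ^ nn) := by
      have : a - a * ε = a * ε' := by
        calc a - a * ε = a * (ε' + ε) - a * ε := by rw [hsum, mul_one]
          _ = a * ε' := by noncomm_ring
      rw [this]; exact haε'
    have := hn.disjoint.le_bot ⟨hdiff', hdiff⟩
    have h0 : a - a * ε = 0 := by simpa using this
    have := sub_eq_zero.1 h0
    exact this.symm
  have hεrange : ε ∈ range (φ ^ nn) := hε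
  have hεε : ε * ε = ε := key ε hεrange
  have hεne : ε ≠ 0 := by
    intro h0
    have hbmem : b ^ nn ∈ range (φ ^ nn) := ⟨1, by rw [hφpow, one_mul]⟩
    have := key _ hbmem
    rw [h0, mul_zero] at this
    exact hbn this.symm
  obtain ⟨c, hc⟩ := hεrange
  refine ⟨ε, c * b ^ (nn - 1), hεne, hεε, ?_⟩
  rw [hφpow] at hc
  rw [mul_assoc, ← pow_succ, Nat.sub_add_cancel hn1, hc]

-- corner unit lemma
lemma aux_corner {E : Type*} [Ring E] {e j : E} (he : e * e = e) (hj : e * j * e = j)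
    (hu : IsUnit (1 - j)) : ∃ w : E, e * w = w ∧ w * (e - j) = e := by
  obtain ⟨u, hu'⟩ := hu
  set s : E := 1 - j with hs
  set a : E := e - j with haa
  have hje : j * e = j := by
    calc j * e = e * j * e * e := by rw [hj]
      _ = e * j * (e * e) := by rw [mul_assoc]
      _ = j := by rw [he, hj]
  have hej : e * j = j := by
    calc e * j = e * (e * j * e) := by rw [hj]
      _ = (e * e) * j * e := by noncomm_ring
      _ = j := by rw [he, hj]
  have hse : s * e = a := by rw [hs, haa, sub_mul, one_mul, hje]
  have hes : e * s = a := by rw [hs, haa, mul_sub, mul_one, hej]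
  have hsu : (u : E) = s := hu'
  have hvs : (↑u⁻¹ : E) * s = 1 := by rw [← hsu]; exact u.inv_mul
  have hsv : s * (↑u⁻¹ : E) = 1 := by rw [← hsu]; exact u.mul_inv
  set v : E := ↑u⁻¹ with hv
  have h1 : v * (s * e) * v = v * (e * s) * v := by rw [hse, hes]
  have hev : e * v = v * e := by
    calc e * v = v * s * e * v := by rw [hvs, one_mul]
      _ = v * (s * e) * v := by rw [mul_assoc v s e]
      _ = v * (e * s) * v := h1
      _ = v * e * s * v := by rw [← mul_assoc v e s]
      _ = v * e * (s * v) := by rw [mul_assoc (v * e) s v]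
      _ = v * e := by rw [hsv, mul_one]
  have hea : e * a = a := by
    rw [haa, mul_sub, he, hej]
  refine ⟨v * e, ?_, ?_⟩
  · rw [← mul_assoc, hev, mul_assoc, he]
  · calc v * e * a = v * (e * a) := by rw [mul_assoc]
      _ = v * a := by rw [hea]
      _ = v * (s * e) := by rw [hse]
      _ = v * s * e := by rw [← mul_assoc]
      _ = e := by rw [hvs, one_mul]

end aux5

section combine
universe u
variable {S : Type u} [CommRing S] [IsLocalRing S]

-- finite modules over a precomplete ring are precomplete
lemma aux_isPrecomplete_finite {I : Ideal S} [IsPrecomplete I S]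
    (N : Type u) [AddCommGroup N] [Module S N] [Module.Finite S N] :
    IsPrecomplete I N := by
  obtain ⟨κ, π₀, hπ₀⟩ := Module.Finite.exists_fin' S N
  haveI := aux_isPrecomplete_pi I κ
  exact aux_isPrecomplete_of_surjective I π₀ hπ₀

end combine

end helpers

open TensorProduct in
/-- Let `(S, n)` be a complete commutative Noetherian local ring and let `R` be an
`S`-algebra which is finitely generated as an `S`-module.  Let `M` be a finitely
generated `R`-module with no nonzero projective direct summand.  If `f : M → M` factors
through a projective `R`-module, then `f` lies in the Jacobson radical of `End_R(M)`:
for every `R`-linear endomorphism `g` of `M`, the endomorphism `id_M - g ∘ f` is an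
automorphism of `M`. -/
theorem factorsThroughProjective_mem_jacobsonRadical
    (S : Type) [CommRing S] [IsNoetherianRing S] [IsLocalRing S]
    [IsAdicComplete (IsLocalRing.maximalIdeal S) S]
    (R : Type) [Ring R] [Algebra S R] [Module.Finite S R]
    (M : Type) [AddCommGroup M] [Module R M] [Module.Finite R M]
    (hM : ∀ N : Submodule R M, (∃ N' : Submodule R M, IsCompl N N') →
      Module.Projective R N → N = ⊥)
    (f : M →ₗ[R] M)
    (hf : ∃ (P : Type) (_ : AddCommGroup P) (_ : Module R P),
      Module.Projective R P ∧ ∃ (g : M →ₗ[R] P) (h : P →ₗ[R] M), f = h ∘ₗ g) :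
    ∀ g : Module.End R M, IsUnit (1 - g * f) := by
  classical
  -- S-module structure on M
  letI : Module S M := Module.compHom M (algebraMap S R)
  have hSsmul : ∀ (s : S) (m : M), s • m = algebraMap S R s • m := fun _ _ => rfl
  letI : IsScalarTower S R M := ⟨fun s r m => by
    rw [hSsmul, Algebra.smul_def, mul_smul]⟩
  letI : SMulCommClass S R M := ⟨fun s r m => by
    rw [hSsmul, hSsmul, ← mul_smul, ← mul_smul, Algebra.commutes]⟩
  letI : SMulCommClass R S M := SMulCommClass.symm S R M
  haveI : Module.Finite S M := Module.Finite.trans R M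
  haveI : IsNoetherian S M := isNoetherian_of_isNoetherianRing_of_finite S M
  -- the endomorphism ring
  haveI : IsNoetherian S (Module.End R M) := by
    refine isNoetherian_of_injective
      (⟨⟨fun φ => LinearMap.restrictScalars S (φ : M →ₗ[R] M), fun _ _ => rfl⟩, fun _ _ => rfl⟩ :
        Module.End R M →ₗ[S] (M →ₗ[S] M))
      fun φ ψ h => ?_
    exact LinearMap.restrictScalars_injective S h
  haveI : Module.Finite S (Module.End R M) := ⟨IsNoetherian.noetherian ⊤⟩
  set n := IsLocalRing.maximalIdeal S with hn
  -- the residue ring and reduction map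
  set k := S ⧸ n with hk
  letI : Field k := Ideal.Quotient.field n
  set Ebar := k ⊗[S] (Module.End R M) with hEbar
  set π : (Module.End R M) →ₐ[S] Ebar := Algebra.TensorProduct.includeRight with hπ
  have hπ_surj : Function.Surjective ⇑π := by
    intro w
    induction w using TensorProduct.induction_on with
    | zero => exact ⟨0, map_zero _⟩
    | tmul c y =>
      obtain ⟨s, rfl⟩ := Ideal.Quotient.mk_surjective c
      refine ⟨s • y, ?_⟩
      rw [map_smul]
      show s • ((1 : k) ⊗ₜ[S] y) = _
      rw [TensorProduct.smul_tmul']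
      congr 1
      rw [Algebra.smul_def, mul_one, Ideal.Quotient.algebraMap_eq]
    | add w₁ w₂ h₁ h₂ =>
      obtain ⟨y₁, hy₁⟩ := h₁
      obtain ⟨y₂, hy₂⟩ := h₂
      exact ⟨y₁ + y₂, by rw [map_add, hy₁, hy₂]⟩
  have hπ_ker : ∀ z : (Module.End R M), π z = 0 → z ∈ n • (⊤ : Submodule S (Module.End R M)) := by
    intro z hz
    have h1 : (TensorProduct.quotTensorEquivQuotSMul (Module.End R M) n) (π z) =
        Submodule.Quotient.mk z := by
      show (TensorProduct.quotTensorEquivQuotSMul (Module.End R M) n) ((1 : k) ⊗ₜ[S] z) = _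
      have : (1 : k) = Ideal.Quotient.mk n 1 := rfl
      rw [this, TensorProduct.quotTensorEquivQuotSMul_mk_tmul, one_smul]
    rw [hz, (TensorProduct.quotTensorEquivQuotSMul (Module.End R M) n).map_zero] at h1
    exact (Submodule.Quotient.mk_eq_zero _).1 h1.symm
  have hπ_ker0 : ∀ z ∈ n • (⊤ : Submodule S (Module.End R M)), π z = 0 := by
    intro z hz
    refine Submodule.smul_induction_on hz (fun s hs y _ => ?_) (fun a b ha hb => ?_)
    · rw [map_smul, algebra_compatible_smul k s (π y), Ideal.Quotient.algebraMap_eq,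
        (Ideal.Quotient.eq_zero_iff_mem).2 hs, zero_smul]
    · rw [map_add, ha, hb, add_zero]
  haveI : IsPrecomplete n (Module.End R M) := aux_isPrecomplete_finite (Module.End R M)
  haveI : IsArtinian k Ebar := isArtinian_of_fg_of_artinian'
  haveI : IsNoetherian k Ebar := isNoetherian_of_isNoetherianRing_of_finite k Ebar
  haveI : IsArtinian Ebar Ebar := isArtinian_of_tower k inferInstance
  haveI : IsNoetherian Ebar Ebar := isNoetherian_of_tower k inferInstance
  obtain ⟨P, _inst1, _inst2, hP, g₀, h₀, hfeq⟩ := hf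
  intro g
  set x : Module.End R M := g * f with hx
  set b : Ebar := π x with hb
  by_cases hnil : IsNilpotent b
  · refine aux_isUnit_of_isUnit_map π.toRingHom hπ_ker hπ_surj ?_
    have h1 : π (1 - x) = 1 - b := by rw [map_sub, map_one, hb]
    show IsUnit (π (1 - x))
    rw [h1]
    exact hnil.isUnit_one_sub
  · exfalso
    obtain ⟨ε, z, hεne, hεidem, hεzb⟩ := aux_brauer hnil
    obtain ⟨t, ht⟩ := hπ_surj z
    obtain ⟨a₀, ha₀⟩ := hπ_surj ε
    have ha₀mem : a₀ * a₀ - a₀ ∈ n • (⊤ : Submodule S (Module.End R M)) := by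
      apply hπ_ker
      rw [map_sub, map_mul, ha₀, hεidem, sub_self]
    obtain ⟨e, hee, hea⟩ := aux_lift_idempotent a₀ ha₀mem
    have hπe : π e = ε := by
      have h0 := hπ_ker0 _ hea
      rw [map_sub, sub_eq_zero] at h0
      rw [h0, ha₀]
    set a : (Module.End R M) := e * (t * x) * e with ha
    have hπa : π a = ε := by
      rw [ha, map_mul, map_mul, map_mul, hπe, ht, ← hb, ← hεzb, hεidem, hεidem]
    set j : (Module.End R M) := e - a with hj
    have hπj : π j = 0 := by rw [hj, map_sub, hπe, hπa, sub_self]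
    have hae : e * a * e = a := by
      rw [ha]
      calc e * (e * (t * x) * e) * e = (e * e) * (t * x) * (e * e) := by noncomm_ring
        _ = e * (t * x) * e := by rw [hee]
    have heje : e * j * e = j := by
      rw [hj]
      calc e * (e - a) * e = e * e * e - e * a * e := by noncomm_ring
        _ = e - a := by rw [hae, hee, hee]
    have hunit : IsUnit ((1 : (Module.End R M)) - j) := by
      refine aux_isUnit_of_isUnit_map π.toRingHom hπ_ker hπ_surj ?_
      show IsUnit (π (1 - j))
      rw [map_sub, map_one, hπj, sub_zero]
      exact isUnit_one
    obtain ⟨w, hew, hwa⟩ := aux_corner hee heje hunit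
    have heja : e - j = a := by rw [hj, sub_sub_cancel]
    rw [heja] at hwa
    -- pointwise key identity
    have hkey : ∀ m : M, (e : Module.End R M) m = w (e (t (g (f (e m))))) := by
      intro m
      have h1 : (w * a) m = e m := congrArg (fun u : Module.End R M => u m) hwa
      rw [ha, hx] at h1
      simpa only [Module.End.mul_apply] using h1.symm
    -- the candidate projective direct summand
    set N₀ : Submodule R M := LinearMap.range (e : M →ₗ[R] M) with hN₀
    set G : M →ₗ[R] P := g₀ ∘ₗ (e : M →ₗ[R] M) with hG
    set H : P →ₗ[R] M := ((w * (e * (t * g)) : Module.End R M) : M →ₗ[R] M) ∘ₗ h₀ with hH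
    have hHapp : ∀ p : P, H p = w (e (t (g (h₀ p)))) := fun p => rfl
    have hHmem : ∀ p : P, H p ∈ N₀ := by
      intro p
      refine ⟨w (e (t (g (h₀ p)))), ?_⟩
      have : (e * w : Module.End R M) (e (t (g (h₀ p)))) = w (e (t (g (h₀ p)))) := by rw [hew]
      rw [Module.End.mul_apply] at this
      rw [this, hHapp]
    have hcompl : IsCompl N₀ (LinearMap.ker (e : M →ₗ[R] M)) := by
      constructor
      · rw [disjoint_iff]
        refine Submodule.eq_bot_iff _ |>.2 fun m hm => ?_
        obtain ⟨y, hy⟩ := hm.1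
        have h2 : (e : M →ₗ[R] M) m = 0 := hm.2
        have h3 : m = (e * e : Module.End R M) y := by rw [hee, hy]
        rw [Module.End.mul_apply, hy] at h3
        rw [h3, h2]
      · rw [codisjoint_iff, eq_top_iff]
        intro m _
        refine Submodule.mem_sup.2 ⟨e m, ⟨m, rfl⟩, m - e m, ?_, by abel⟩
        have : (e : M →ₗ[R] M) (m - e m) = 0 := by
          rw [map_sub, ← Module.End.mul_apply e e, hee, sub_self]
        exact this
    haveI : Module.Projective R P := hP
    have hproj : Module.Projective R N₀ := by
      refine Module.Projective.of_split (G ∘ₗ N₀.subtype)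
        (LinearMap.codRestrict N₀ H hHmem) ?_
      ext ⟨m, hm⟩
      obtain ⟨y, rfl⟩ := hm
      have hGm : (G ∘ₗ N₀.subtype) ⟨e y, ⟨y, rfl⟩⟩ = g₀ (e (e y)) := rfl
      have h1 : H (g₀ (e (e y))) = e y := by
        have h2 := hkey y
        have hfg : f (e y) = h₀ (g₀ (e y)) := by rw [hfeq]; rfl
        have hee' : (e : Module.End R M) (e y) = e y := by
          rw [← Module.End.mul_apply, hee]
        rw [hHapp, hee', ← hfg, ← h2]
      show H (g₀ (e (e y))) = e y
      exact h1
    have hbot := hM N₀ ⟨LinearMap.ker (e : M →ₗ[R] M), hcompl⟩ hproj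
    have he0 : (e : M →ₗ[R] M) = 0 := LinearMap.range_eq_bot.1 hbot
    apply hεne
    rw [← hπe]
    have : e = (0 : (Module.End R M)) := he0
    rw [this, map_zero]
end

section
/- Let T and T′ be triangulated categories and let F : T → T′ be a triangulated functor. Let K be the full triangulated subcategory of T consisting of the objects X with F(X) isomorphic to zero, let q : T → T/K denote the Verdier quotient functor, and let G : T/K → T′ be a functor with a natural isomorphism G ∘ q ≅ F. If G is full, then G is faithful. In particular, if F is full and essentially surjective, then G is an equivalence of categories (that is, F is a triangulated quotient functor). -/
open CategoryTheory Limits Pretriangulated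

/-- The class of morphisms of `T` admitting a cone killed by `F`.  Localizing at this
class is the Verdier quotient of `T` by the kernel of `F` (the full triangulated
subcategory of objects `X` with `F.obj X ≅ 0`). -/
def coneKilledByF {T : Type u₁} [Category.{v₁} T] [HasZeroObject T] [HasShift T ℤ]
    [Preadditive T] [∀ n : ℤ, (shiftFunctor T n).Additive] [Pretriangulated T]
    {T' : Type u₂} [Category.{v₂} T'] (F : T ⥤ T') [Limits.HasZeroMorphisms T'] :
    MorphismProperty T :=
  fun X Y f => ∃ (Z : T) (g : Y ⟶ Z) (h : Z ⟶ X⟦(1 : ℤ)⟧),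
    (Triangle.mk f g h ∈ distTriang T) ∧ IsZero (F.obj Z)

section Aux

variable {T : Type u₁} [Category.{v₁} T] [HasZeroObject T] [HasShift T ℤ]
    [Preadditive T] [∀ n : ℤ, (shiftFunctor T n).Additive] [Pretriangulated T]
    {T' : Type u₂} [Category.{v₂} T'] [HasZeroObject T'] [HasShift T' ℤ]
    [Preadditive T'] [∀ n : ℤ, (shiftFunctor T' n).Additive] [Pretriangulated T']
    (F : T ⥤ T') [F.CommShift ℤ] [F.IsTriangulated]

/-- A morphism has a cone killed by `F` iff its image under `F` is invertible. -/
lemma coneKilledByF_iff_isIso {X Y : T} (f : X ⟶ Y) :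
    coneKilledByF F f ↔ IsIso (F.map f) := by
  constructor
  · rintro ⟨Z, g, h, mem, hZ⟩
    exact ((F.mapTriangle.obj (Triangle.mk f g h)).isZero₃_iff_isIso₁
      (F.map_distinguished _ mem)).1 hZ
  · intro hf
    obtain ⟨Z, g, h, mem⟩ := distinguished_cocone_triangle f
    exact ⟨Z, g, h, mem, (F.mapTriangle.obj (Triangle.mk f g h)).isZero₃_of_isIso₁
      (F.map_distinguished _ mem) hf⟩

lemma coneKilledByF_isMultiplicative :
    (coneKilledByF F).IsMultiplicative where
  id_mem X := by
    rw [coneKilledByF_iff_isIso, F.map_id]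
    infer_instance
  comp_mem f g hf hg := by
    rw [coneKilledByF_iff_isIso] at hf hg ⊢
    rw [Functor.map_comp]
    haveI := hf
    haveI := hg
    infer_instance

/-- If `f : X ⟶ Y` has a cone killed by `F` then `F.obj` of any cone of `f` is zero. -/
lemma coneKilledByF_cone_isZero {X Y Z : T} {f : X ⟶ Y} {g : Y ⟶ Z} {h : Z ⟶ X⟦(1 : ℤ)⟧}
    (mem : Triangle.mk f g h ∈ distTriang T) (hf : coneKilledByF F f) :
    IsZero (F.obj Z) := by
  rw [coneKilledByF_iff_isIso] at hf
  exact (F.mapTriangle.obj (Triangle.mk f g h)).isZero₃_of_isIso₁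
    (F.map_distinguished _ mem) hf

lemma coneKilledByF_hasLeftCalculusOfFractions :
    (coneKilledByF F).HasLeftCalculusOfFractions := by
  haveI := coneKilledByF_isMultiplicative F
  refine ⟨?_, ?_⟩
  · rintro X Y φ
    obtain ⟨Z, g, h, mem⟩ := distinguished_cocone_triangle φ.s
    have hZ : IsZero (F.obj Z) := coneKilledByF_cone_isZero F mem φ.hs
    -- the inverse rotation of the triangle on `φ.s`
    have memT₁ : (Triangle.mk φ.s g h).invRotate ∈ distTriang T :=
      inv_rot_of_distTriang _ mem
    obtain ⟨V, s', h', mem'⟩ :=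
      distinguished_cocone_triangle ((Triangle.mk φ.s g h).invRotate.mor₁ ≫ φ.f)
    have hZ' : IsZero (F.obj (Z⟦(-1 : ℤ)⟧)) := by
      refine IsZero.of_iso ?_ ((F.commShiftIso (-1 : ℤ)).app Z)
      exact (shiftFunctor T' (-1 : ℤ)).map_isZero hZ
    have hs' : coneKilledByF F s' := by
      rw [coneKilledByF_iff_isIso]
      exact ((F.mapTriangle.obj
        (Triangle.mk ((Triangle.mk φ.s g h).invRotate.mor₁ ≫ φ.f) s' h')).isZero₁_iff_isIso₂
        (F.map_distinguished _ mem')).1 hZ'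
    obtain ⟨c, hc, -⟩ := complete_distinguished_triangle_morphism
      (Triangle.mk φ.s g h).invRotate
      (Triangle.mk ((Triangle.mk φ.s g h).invRotate.mor₁ ≫ φ.f) s' h') memT₁ mem'
      (𝟙 _) φ.f (Category.id_comp _).symm
    change φ.s ≫ c = φ.f ≫ s' at hc
    exact ⟨⟨c, s', hs'⟩, hc.symm⟩
  · rintro X' X Y f₁ f₂ s hs hsf
    obtain ⟨Z, g, h, mem⟩ := distinguished_cocone_triangle s
    have hZ : IsZero (F.obj Z) := coneKilledByF_cone_isZero F mem hs
    have hf : (Triangle.mk s g h).mor₁ ≫ (f₁ - f₂) = 0 := by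
      change s ≫ (f₁ - f₂) = 0
      rw [Preadditive.comp_sub, hsf, sub_self]
    obtain ⟨u, hu⟩ := Triangle.yoneda_exact₂ _ mem (f₁ - f₂) hf
    change Z ⟶ Y at u
    obtain ⟨V, t, h', mem'⟩ := distinguished_cocone_triangle u
    have ht : coneKilledByF F t := by
      rw [coneKilledByF_iff_isIso]
      exact ((F.mapTriangle.obj (Triangle.mk u t h')).isZero₁_iff_isIso₂
        (F.map_distinguished _ mem')).1 hZ
    refine ⟨V, t, ht, ?_⟩
    have h0 : (f₁ - f₂) ≫ t = 0 := by
      have hz := comp_distTriang_mor_zero₁₂ _ mem'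
      change u ≫ t = 0 at hz
      rw [hu]
      change (g ≫ u) ≫ t = 0
      rw [Category.assoc, hz, Limits.comp_zero]
    rw [Preadditive.sub_comp, sub_eq_zero] at h0
    exact h0

/-- Core step: if `G` is full and two maps have the same image under `F`, they are
equalized by postcomposition with a morphism whose cone is killed by `F`. -/
lemma coneKilledByF_ext_of_full
    (G : (coneKilledByF F).Localization ⥤ T')
    (e : (coneKilledByF F).Q ⋙ G ≅ F) (hFull : G.Full)
    {X Y : T} (f₁ f₂ : X ⟶ Y) (hf : F.map f₁ = F.map f₂) :
    ∃ (V : T) (t : Y ⟶ V), coneKilledByF F t ∧ f₁ ≫ t = f₂ ≫ t := by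
  haveI := coneKilledByF_hasLeftCalculusOfFractions F
  have hf0 : F.map (f₁ - f₂) = 0 := by rw [F.map_sub, hf, sub_self]
  obtain ⟨Z, g, h, mem⟩ := distinguished_cocone_triangle (f₁ - f₂)
  -- `F.map g` admits a retraction `r`
  obtain ⟨r, hr⟩ := Triangle.yoneda_exact₂ (F.mapTriangle.obj (Triangle.mk (f₁ - f₂) g h))
    (F.map_distinguished _ mem) (𝟙 (F.obj Y)) (by change F.map (f₁ - f₂) ≫ 𝟙 (F.obj Y) = 0; rw [hf0, Limits.zero_comp])
  change 𝟙 (F.obj Y) = F.map g ≫ r at hr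
  change F.obj Z ⟶ F.obj Y at r
  -- lift the retraction through `G`
  obtain ⟨ρ, hρ⟩ := hFull.map_surjective
    (e.hom.app Z ≫ r ≫ e.inv.app Y :
      G.obj ((coneKilledByF F).Q.obj Z) ⟶ G.obj ((coneKilledByF F).Q.obj Y))
  obtain ⟨ψ, hψ⟩ := Localization.exists_leftFraction (coneKilledByF F).Q (coneKilledByF F) ρ
  have natG : ∀ {A B : T} (k : A ⟶ B),
      G.map ((coneKilledByF F).Q.map k) = e.hom.app A ≫ F.map k ≫ e.inv.app B := by
    intro A B k
    have h' := e.hom.naturality k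
    dsimp at h'
    rw [← Category.assoc, ← h']
    simp
  have hcomp : ρ ≫ (coneKilledByF F).Q.map ψ.s = (coneKilledByF F).Q.map ψ.f := by
    rw [hψ]
    exact ψ.map_comp_map_s _ _
  have hFψ : F.map ψ.f = r ≫ F.map ψ.s := by
    have hc := congrArg G.map hcomp
    rw [G.map_comp, hρ, natG, natG] at hc
    simp only [Category.assoc] at hc
    have h1 := congrArg (fun x => e.inv.app Z ≫ x ≫ e.hom.app ψ.Y') hc
    dsimp at h1
    simpa only [Iso.inv_hom_id_app_assoc, Iso.inv_hom_id_app, Category.comp_id,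
      Category.assoc] using h1.symm
  refine ⟨ψ.Y', g ≫ ψ.f, ?_, ?_⟩
  · rw [coneKilledByF_iff_isIso, F.map_comp, hFψ, ← Category.assoc, ← hr,
      Category.id_comp]
    exact (coneKilledByF_iff_isIso F ψ.s).1 ψ.hs
  · have h0 : (f₁ - f₂) ≫ (g ≫ ψ.f) = 0 := by
      have hz := comp_distTriang_mor_zero₁₂ _ mem
      change (f₁ - f₂) ≫ g = 0 at hz
      rw [← Category.assoc, hz, Limits.zero_comp]
    rw [Preadditive.sub_comp, sub_eq_zero] at h0
    exact h0

end Aux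

/-- Let `F : T ⥤ T'` be a triangulated functor, let `q : T ⥤ T/K` be the Verdier
quotient of `T` by the kernel `K` of `F` (realized as the localization of `T` at the
class of morphisms whose cone is killed by `F`), and let `G : T/K ⥤ T'` be a functor
together with a natural isomorphism `q ⋙ G ≅ F`.  If `G` is full then `G` is faithful;
in particular, if `F` is full and essentially surjective then `G` is an equivalence. -/
theorem verdier_quotient_full_implies_faithful
    {T : Type u₁} [Category.{v₁} T] [HasZeroObject T] [HasShift T ℤ]
    [Preadditive T] [∀ n : ℤ, (shiftFunctor T n).Additive] [Pretriangulated T]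
    {T' : Type u₂} [Category.{v₂} T'] [HasZeroObject T'] [HasShift T' ℤ]
    [Preadditive T'] [∀ n : ℤ, (shiftFunctor T' n).Additive] [Pretriangulated T']
    (F : T ⥤ T') [F.CommShift ℤ] [F.IsTriangulated]
    (G : (coneKilledByF F).Localization ⥤ T')
    (e : (coneKilledByF F).Q ⋙ G ≅ F) :
    (G.Full → G.Faithful) ∧ (F.Full → F.EssSurj → G.IsEquivalence) := by
  haveI := coneKilledByF_hasLeftCalculusOfFractions F
  haveI : (coneKilledByF F).Q.EssSurj := Localization.essSurj (coneKilledByF F).Q (coneKilledByF F)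
  have natG : ∀ {A B : T} (k : A ⟶ B),
      G.map ((coneKilledByF F).Q.map k) = e.hom.app A ≫ F.map k ≫ e.inv.app B := by
    intro A B k
    have h' := e.hom.naturality k
    dsimp at h'
    rw [← Category.assoc, ← h']
    simp
  have hfaithful : G.Full → G.Faithful := by
    intro hFull
    have key : ∀ (X Y : T) (φ₁ φ₂ : (coneKilledByF F).Q.obj X ⟶ (coneKilledByF F).Q.obj Y),
        G.map φ₁ = G.map φ₂ → φ₁ = φ₂ := by
      intro X Y φ₁ φ₂ hG
      obtain ⟨φ, h₁, h₂⟩ :=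
        Localization.exists_leftFraction₂ (coneKilledByF F).Q (coneKilledByF F) φ₁ φ₂
      haveI : IsIso ((coneKilledByF F).Q.map φ.s) :=
        Localization.inverts (coneKilledByF F).Q (coneKilledByF F) φ.s φ.hs
      have hQ : G.map ((coneKilledByF F).Q.map φ.f)
          = G.map ((coneKilledByF F).Q.map φ.f') := by
        have e₁ : φ₁ ≫ (coneKilledByF F).Q.map φ.s = (coneKilledByF F).Q.map φ.f := by
          rw [h₁]; exact φ.fst.map_comp_map_s _ _
        have e₂ : φ₂ ≫ (coneKilledByF F).Q.map φ.s = (coneKilledByF F).Q.map φ.f' := by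
          rw [h₂]; exact φ.snd.map_comp_map_s _ _
        rw [← e₁, ← e₂, G.map_comp, G.map_comp, hG]
      have hF : F.map φ.f = F.map φ.f' := by
        rw [natG, natG] at hQ
        rw [← cancel_epi (e.hom.app X), ← cancel_mono (e.inv.app φ.Y')]
        simp only [Category.assoc]
        exact hQ
      obtain ⟨V, t, ht, hft⟩ := coneKilledByF_ext_of_full F G e hFull φ.f φ.f' hF
      haveI : IsIso ((coneKilledByF F).Q.map t) :=
        Localization.inverts (coneKilledByF F).Q (coneKilledByF F) t ht
      have hQf : (coneKilledByF F).Q.map φ.f = (coneKilledByF F).Q.map φ.f' := by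
        rw [← cancel_mono ((coneKilledByF F).Q.map t), ← (coneKilledByF F).Q.map_comp,
          ← (coneKilledByF F).Q.map_comp, hft]
      rw [h₁, h₂]
      dsimp [MorphismProperty.LeftFraction.map]
      rw [hQf]
    refine ⟨fun {A B φ₁ φ₂} hG => ?_⟩
    have iA := (coneKilledByF F).Q.objObjPreimageIso A
    have iB := (coneKilledByF F).Q.objObjPreimageIso B
    have hk := key _ _ (iA.hom ≫ φ₁ ≫ iB.inv) (iA.hom ≫ φ₂ ≫ iB.inv)
      (by simp only [G.map_comp, hG])
    calc φ₁ = iA.inv ≫ (iA.hom ≫ φ₁ ≫ iB.inv) ≫ iB.hom := by simp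
      _ = iA.inv ≫ (iA.hom ≫ φ₂ ≫ iB.inv) ≫ iB.hom := by rw [hk]
      _ = φ₂ := by simp
  refine ⟨hfaithful, fun hF hE => ?_⟩
  have hGfull : G.Full := by
    refine ⟨fun {A B} a => ?_⟩
    have iA := (coneKilledByF F).Q.objObjPreimageIso A
    have iB := (coneKilledByF F).Q.objObjPreimageIso B
    obtain ⟨f, hf⟩ := hF.map_surjective
      (e.inv.app _ ≫ G.map iA.hom ≫ a ≫ G.map iB.inv ≫ e.hom.app _ :
        F.obj ((coneKilledByF F).Q.objPreimage A) ⟶ F.obj ((coneKilledByF F).Q.objPreimage B))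
    refine ⟨iA.inv ≫ (coneKilledByF F).Q.map f ≫ iB.hom, ?_⟩
    rw [G.map_comp, G.map_comp, natG, hf]
    simp only [Category.assoc, Iso.hom_inv_id_app_assoc, Iso.inv_hom_id_app]
    rw [← G.map_comp_assoc, iA.inv_hom_id, G.map_id, Category.id_comp]
    simp only [Category.comp_id, ← G.map_comp_assoc, ← G.map_comp]
    rw [iB.inv_hom_id, G.map_id, Category.comp_id]
  have hGes : G.EssSurj := by
    refine ⟨fun Y' => ?_⟩
    haveI := hE
    exact ⟨(coneKilledByF F).Q.obj (F.objPreimage Y'), ⟨e.app _ ≪≫ F.objObjPreimageIso Y'⟩⟩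
  exact { full := hGfull, faithful := hfaithful hGfull, essSurj := hGes }
end

section
/- Let O be a commutative Noetherian ring and let A be an O-algebra which is finitely generated as an O-module. Let φ : M → N be an injective homomorphism of finitely generated A-modules. Then there exist a finitely generated A-module K whose support over O is contained in the support of M over O (i.e., every prime ideal p of O with K_p ≠ 0 satisfies M_p ≠ 0), and an A-module homomorphism ψ : N → K, such that the composition ψ ∘ φ : M → K is injective. -/
/-- Let `O` be a commutative Noetherian ring and `A` an `O`-algebra which is finitely
generated as an `O`-module.  Given an injective homomorphism `φ : M → N` of finitely
generated `A`-modules, there exist a finitely generated `A`-module `K` whose support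
over `O` is contained in the support of `M` over `O`, and an `A`-linear map `ψ : N → K`
such that `ψ ∘ φ` is injective. -/
theorem exists_injective_compression
    (O : Type) [CommRing O] [IsNoetherianRing O]
    (A : Type) [Ring A] [Algebra O A] [Module.Finite O A]
    (M : Type) [AddCommGroup M] [Module O M] [Module A M] [IsScalarTower O A M]
    [Module.Finite A M]
    (N : Type) [AddCommGroup N] [Module O N] [Module A N] [IsScalarTower O A N]
    [Module.Finite A N]
    (φ : M →ₗ[A] N) (hφ : Function.Injective φ) :
    ∃ (K : Type) (_ : AddCommGroup K) (_ : Module O K) (_ : Module A K)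
      (_ : IsScalarTower O A K),
      Module.Finite A K ∧ Module.support O K ⊆ Module.support O M ∧
      ∃ ψ : N →ₗ[A] K, Function.Injective (ψ ∘ₗ φ) := by
  classical
  obtain ⟨P, -, hPmax⟩ := zorn_le_nonempty₀
      {P : Submodule A N | P ⊓ LinearMap.range φ = ⊥}
      (fun c hc hchain y hy => by
        refine ⟨sSup c, ?_, fun z hz => le_sSup hz⟩
        rw [Set.mem_setOf_eq, eq_bot_iff]
        rintro x ⟨hx1, hx2⟩
        obtain ⟨p, hpc, hxp⟩ := (Submodule.mem_sSup_of_directed ⟨y, hy⟩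
          hchain.directedOn).mp hx1
        have := hc hpc
        rw [Set.mem_setOf_eq, eq_bot_iff] at this
        exact this ⟨hxp, hx2⟩)
      ⊥ (by simp)
  have hP : P ⊓ LinearMap.range φ = ⊥ := hPmax.prop
  refine ⟨N ⧸ P, inferInstance, inferInstance, inferInstance, inferInstance,
    inferInstance, ?_, P.mkQ, ?_⟩
  · -- support condition
    have hMfin : Module.Finite O M := Module.Finite.trans A M
    have hKfin : Module.Finite O (N ⧸ P) := Module.Finite.trans A _
    intro q hq
    rw [Module.support_eq_zeroLocus, PrimeSpectrum.mem_zeroLocus]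
    intro r hr
    -- essential extension property
    have hess : ∀ x : N ⧸ P, x ≠ 0 → ∃ a : A, a • x ≠ 0 ∧
        ∃ m : M, a • x = P.mkQ (φ m) := by
      intro x hx
      obtain ⟨n, rfl⟩ := P.mkQ_surjective x
      have hnP : n ∉ P := fun h => hx ((Submodule.Quotient.mk_eq_zero P).mpr h)
      have hlt : P < P ⊔ Submodule.span A {n} :=
        lt_of_le_of_ne le_sup_left (fun h => hnP
          (h ▸ Submodule.mem_sup_right (Submodule.mem_span_singleton_self n)))
      have hnot : ¬ ((P ⊔ Submodule.span A {n}) ⊓ LinearMap.range φ = ⊥) :=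
        fun h => absurd (hPmax.le_of_ge h hlt.le) (not_le_of_gt hlt)
      rw [eq_bot_iff, SetLike.not_le_iff_exists] at hnot
      obtain ⟨y, ⟨hy1, hy2⟩, hy0⟩ := hnot
      have hy0' : y ≠ 0 := by simpa using hy0
      obtain ⟨p, hp, z, hz, rfl⟩ := Submodule.mem_sup.mp hy1
      obtain ⟨a, rfl⟩ := Submodule.mem_span_singleton.mp hz
      obtain ⟨m, hm⟩ := hy2
      refine ⟨a, ?_, m, ?_⟩
      · intro h0
        rw [Submodule.mkQ_apply, ← Submodule.Quotient.mk_smul,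
          Submodule.Quotient.mk_eq_zero] at h0
        have hPy : p + a • n ∈ P ⊓ LinearMap.range φ :=
          ⟨add_mem hp h0, ⟨m, hm⟩⟩
        rw [hP] at hPy
        exact hy0' hPy
      · have h1 : P.mkQ (φ m) = P.mkQ (p + a • n) := by rw [hm]
        have hp0 : P.mkQ p = 0 := (Submodule.Quotient.mk_eq_zero P).mpr hp
        rw [h1, map_add, map_smul, hp0, zero_add]
    -- evaluation of powers of lsmul
    set f : (N ⧸ P) →ₗ[O] (N ⧸ P) := LinearMap.lsmul O (N ⧸ P) r with hf
    have heval : ∀ k (y : N ⧸ P), (f ^ k) y = r ^ k • y := by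
      intro k
      induction k with
      | zero => intro y; simp
      | succ k ih =>
        intro y
        rw [pow_succ, Module.End.mul_apply, show f y = r • y from rfl, ih,
          ← mul_smul, ← pow_succ]
    obtain ⟨n, hn⟩ := monotone_stabilizes_iff_noetherian.mpr
      (inferInstance : IsNoetherian O (N ⧸ P)) f.iterateKer
    have hpow : ∀ x : N ⧸ P, r ^ n • x = 0 := by
      intro x
      by_contra hx
      obtain ⟨a, ha, m, hm⟩ := hess (r ^ n • x) hx
      -- r kills the image of M
      have hrm : r • (a • r ^ n • x) = 0 := by
        rw [hm]
        have h2 : r • P.mkQ (φ m) = P.mkQ (φ (r • m)) := by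
          rw [← algebraMap_smul A r m, map_smul, map_smul, algebraMap_smul]
        have h3 : r • m = 0 := Module.mem_annihilator.mp hr m
        rw [h2, h3, map_zero, map_zero]
      have hker : a • x ∈ f.iterateKer (n + 1) := by
        show a • x ∈ LinearMap.ker (f ^ (n + 1))
        rw [LinearMap.mem_ker, heval, pow_succ, mul_smul, smul_comm (r ^ n) r]
        rwa [smul_comm a (r ^ n) x] at hrm
      rw [← hn (n + 1) (Nat.le_succ n)] at hker
      have h4 : r ^ n • (a • x) = 0 := by
        have := (LinearMap.mem_ker.mp hker)
        rwa [heval] at this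
      rw [smul_comm] at h4
      exact ha h4
    have : r ^ n ∈ Module.annihilator O (N ⧸ P) :=
      Module.mem_annihilator.mpr hpow
    exact q.2.mem_of_pow_mem n (Module.annihilator_le_of_mem_support hq this)
  · -- injectivity
    rw [← LinearMap.ker_eq_bot, LinearMap.ker_comp, Submodule.ker_mkQ, eq_bot_iff]
    intro m hm
    have : φ m ∈ P ⊓ LinearMap.range φ := ⟨hm, ⟨m, rfl⟩⟩
    rw [hP] at this
    simp only [Submodule.mem_bot] at this ⊢
    exact hφ (by simpa using this)
end

section
/- Let O be a commutative ring, let F be a finitely generated O-module admitting O as a direct summand, and let A = End_O(F) be its endomorphism ring, so that F is a left A-module via evaluation and the A-action commutes with the O-action. Then the functor F ⊗_O − from the homotopy category of bounded complexes of finitely generated projective O-modules to the derived category of left A-modules is fully faithful: for all bounded complexes P• and Q• of finitely generated projective O-modules, it induces a bijection from the group of homotopy classes of chain maps P• → Q• to Hom_{D(A)}(F ⊗_O P•, F ⊗_O Q•). -/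
open CategoryTheory Limits TensorProduct

noncomputable instance stmt13HasDerivedCategory (A : Type) [Ring A] :
    HasDerivedCategory (ModuleCat.{0} A) :=
  HasDerivedCategory.standard _

/-- The functor `F ⊗_O -` from `O`-modules to modules over `A = End_O(F)`, where `A` acts
on the first tensor factor by evaluation. -/
noncomputable def tensorFunctor (O : Type) [CommRing O] (F : Type) [AddCommGroup F]
    [Module O F] : ModuleCat.{0} O ⥤ ModuleCat.{0} (Module.End O F) where
  obj M := ModuleCat.of (Module.End O F) (F ⊗[O] M)
  map {M N} f :=
    ModuleCat.ofHom
    { toFun := LinearMap.lTensor F f.hom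
      map_add' := fun x y => map_add _ x y
      map_smul' := fun a x => by
        have key : ∀ y : F ⊗[O] M,
            (LinearMap.lTensor F f.hom) (a • y) = a • (LinearMap.lTensor F f.hom) y := by
          intro y
          induction y using TensorProduct.induction_on with
          | zero => simp
          | tmul m n =>
            rw [TensorProduct.smul_tmul', LinearMap.lTensor_tmul,
              LinearMap.lTensor_tmul, TensorProduct.smul_tmul']
          | add u v hu hv => rw [smul_add, map_add, hu, hv, map_add, smul_add]
        exact key x }
  map_id M := by
    apply ModuleCat.hom_ext
    apply LinearMap.ext
    intro x
    show LinearMap.lTensor F (LinearMap.id) x = x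
    rw [LinearMap.lTensor_id]
    rfl
  map_comp {M N P} f g := by
    apply ModuleCat.hom_ext
    apply LinearMap.ext
    intro x
    show LinearMap.lTensor F (g.hom ∘ₗ f.hom) x = _
    rw [LinearMap.lTensor_comp]
    rfl

instance tensorFunctor_additive (O : Type) [CommRing O] (F : Type) [AddCommGroup F]
    [Module O F] : (tensorFunctor O F).Additive where
  map_add := by
    intro M N f g
    apply ModuleCat.hom_ext
    apply LinearMap.ext
    intro x
    show LinearMap.lTensor F (f.hom + g.hom) x = _
    rw [LinearMap.lTensor_add]
    rfl


section Part1
open TensorProduct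
variable {O : Type} [CommRing O] {F : Type} [AddCommGroup F] [Module O F]

/-- contraction `F ⊗ N → N`, `x ⊗ n ↦ p x • n`. -/
noncomputable def ctr (p : F →ₗ[O] O) (N : Type) [AddCommGroup N] [Module O N] :
    F ⊗[O] N →ₗ[O] N :=
  TensorProduct.lift ((LinearMap.lsmul O N).comp p)

@[simp] lemma ctr_tmul (p : F →ₗ[O] O) {N : Type} [AddCommGroup N] [Module O N]
    (x : F) (n : N) : ctr p N (x ⊗ₜ n) = p x • n := rfl

variable (ι : O →ₗ[O] F) (p : F →ₗ[O] O) (hp : p ∘ₗ ι = LinearMap.id)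

include hp in
lemma p_ι_one : p (ι 1) = 1 := by
  have := LinearMap.ext_iff.mp hp 1
  simpa using this

-- the A-action on pure tensors
lemma end_smul_tmul {M : Type} [AddCommGroup M] [Module O M]
    (a : Module.End O F) (x : F) (m : M) :
    a • (x ⊗ₜ[O] m) = a x ⊗ₜ[O] m := by
  rw [TensorProduct.smul_tmul']
  rfl

lemma end_osmul_smul {M : Type} [AddCommGroup M] [Module O M] (r : O) (t : F ⊗[O] M) :
    (r • (LinearMap.id : Module.End O F)) • t = r • t := by
  induction t using TensorProduct.induction_on with
  | zero => simp
  | tmul x m => rw [end_smul_tmul, TensorProduct.smul_tmul']; rfl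
  | add u v hu hv => rw [smul_add, smul_add, hu, hv]

section
variable {M N : Type} [AddCommGroup M] [Module O M] [AddCommGroup N] [Module O N]

include hp in
lemma lTensor_injective (φ ψ : M →ₗ[O] N)
    (h : LinearMap.lTensor F φ = LinearMap.lTensor F ψ) : φ = ψ := by
  ext m
  have h1 : LinearMap.lTensor F φ (ι 1 ⊗ₜ m) = LinearMap.lTensor F ψ (ι 1 ⊗ₜ m) := by rw [h]
  simp only [LinearMap.lTensor_tmul] at h1
  have := congrArg (ctr p N) h1
  simpa [p_ι_one ι p hp] using this

include hp in
lemma lTensor_surjective_of_A_linear (ψ : F ⊗[O] M →ₗ[Module.End O F] F ⊗[O] N) :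
    ∃ φ : M →ₗ[O] N, ∀ t, LinearMap.lTensor F φ t = ψ t := by
  classical
  -- ψ is O-linear
  have hψO : ∀ (r : O) (t : F ⊗[O] M), ψ (r • t) = r • ψ t := by
    intro r t
    rw [← end_osmul_smul, map_smul, end_osmul_smul]
  let ψO : F ⊗[O] M →ₗ[O] F ⊗[O] N :=
    { toFun := ψ, map_add' := map_add ψ, map_smul' := hψO }
  let u : M →ₗ[O] F ⊗[O] M := TensorProduct.mk O F M (ι 1)
  refine ⟨(ctr p N) ∘ₗ ψO ∘ₗ u, ?_⟩
  intro t
  induction t using TensorProduct.induction_on with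
  | zero => simp
  | tmul x m =>
    let a : Module.End O F := p.smulRight x
    have hx : a • ((ι 1 : F) ⊗ₜ[O] m) = x ⊗ₜ[O] m := by
      rw [end_smul_tmul]
      simp [a, p_ι_one ι p hp]
    have key : ∀ s : F ⊗[O] N, a • s = x ⊗ₜ[O] (ctr p N s) := by
      intro s
      induction s using TensorProduct.induction_on with
      | zero => simp
      | tmul y n =>
        rw [end_smul_tmul]
        simp only [ctr_tmul, LinearMap.smulRight_apply, a]
        rw [TensorProduct.smul_tmul]
      | add u v hu hv => rw [smul_add, hu, hv, ctr .. |>.map_add, TensorProduct.tmul_add]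
    calc LinearMap.lTensor F ((ctr p N) ∘ₗ ψO ∘ₗ u) (x ⊗ₜ m)
        = x ⊗ₜ (ctr p N (ψ (ι 1 ⊗ₜ m))) := by simp [u, ψO]
      _ = a • ψ (ι 1 ⊗ₜ m) := (key _).symm
      _ = ψ (a • (ι 1 ⊗ₜ m)) := (map_smul ψ a _).symm
      _ = ψ (x ⊗ₜ m) := by rw [hx]
  | add u v hu hv => rw [map_add, map_add, hu, hv]

include hp in
lemma projective_A_F : Module.Projective (Module.End O F) F := by
  refine Module.Projective.of_split (M := Module.End O F)
    { toFun := fun x => p.smulRight x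
      map_add' := fun x y => by ext z; simp
      map_smul' := fun a x => by
        ext y
        simp [Module.End.smul_def, Module.End.mul_apply] }
    { toFun := fun a => a (ι 1)
      map_add' := fun a b => rfl
      map_smul' := fun a b => rfl }
    ?_
  ext x
  simp [Module.End.smul_def, p_ι_one ι p hp]

end
end Part1

section Part2
open TensorProduct
variable {O : Type} [CommRing O] {F : Type} [AddCommGroup F] [Module O F]
variable (ι : O →ₗ[O] F) (p : F →ₗ[O] O) (hp : p ∘ₗ ι = LinearMap.id)

include hp in
lemma tensorFunctor_faithful : (tensorFunctor O F).Faithful := by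
  constructor
  intro M N f g h
  exact ModuleCat.hom_ext (lTensor_injective ι p hp f.hom g.hom (LinearMap.ext fun t => congrArg (fun ψ => ψ.hom t) h))

include hp in
lemma tensorFunctor_full : (tensorFunctor O F).Full := by
  constructor
  intro M N ψ
  obtain ⟨φ, hφ⟩ := lTensor_surjective_of_A_linear ι p hp ψ.hom
  exact ⟨ModuleCat.ofHom φ, ModuleCat.hom_ext (LinearMap.ext fun t => hφ t)⟩

include hp in
lemma projective_A_tensor (M : Type) [AddCommGroup M] [Module O M]
    [Module.Projective O M] : Module.Projective (Module.End O F) (F ⊗[O] M) :=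
  haveI := projective_A_F ι p hp
  Module.Projective.tensorProduct

instance subsingleton_tensor (M : Type) [AddCommGroup M] [Module O M] [Subsingleton M] :
    Subsingleton (F ⊗[O] M) := by
  have : ∀ t : F ⊗[O] M, t = 0 := by
    intro t
    induction t using TensorProduct.induction_on with
    | zero => rfl
    | tmul x m => rw [Subsingleton.elim m 0, TensorProduct.tmul_zero]
    | add u v hu hv => rw [hu, hv, add_zero]
  exact ⟨fun a b => by rw [this a, this b]⟩

end Part2

section Part3
open CategoryTheory Limits
variable {C D : Type*} [Category C] [Category D] [Preadditive C] [Preadditive D]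
  (G : C ⥤ D) [G.Additive] [G.Full] [G.Faithful]
  {c : ComplexShape ℤ}

lemma mapHomologicalComplex_map_surjective {K L : HomologicalComplex C c}
    (ψ : (G.mapHomologicalComplex c).obj K ⟶ (G.mapHomologicalComplex c).obj L) :
    ∃ φ : K ⟶ L, (G.mapHomologicalComplex c).map φ = ψ := by
  refine ⟨{ f := fun n => G.preimage (ψ.f n), comm' := ?_ }, ?_⟩
  · intro i j hij
    apply G.map_injective
    have := ψ.comm i j
    simp only [Functor.map_comp]
    erw [G.map_preimage, G.map_preimage]
    exact this
  · ext n
    exact G.map_preimage (ψ.f n)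

open Classical in
/-- transfer a homotopy along a fully faithful additive functor -/
noncomputable def homotopyOfMapHomotopy {K L : HomologicalComplex C c} (φ₁ φ₂ : K ⟶ L)
    (H : Homotopy ((G.mapHomologicalComplex c).map φ₁) ((G.mapHomologicalComplex c).map φ₂)) :
    Homotopy φ₁ φ₂ where
  hom i j := if h : c.Rel j i then G.preimage (H.hom i j) else 0
  zero i j h := by simp only [dif_neg h]
  comm i := by
    apply G.map_injective
    have hc := H.comm i
    rw [Functor.map_add, Functor.map_add]
    have e1 : G.map (dNext i fun i j => if h : c.Rel j i then G.preimage (H.hom i j) else 0)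
        = dNext i H.hom := by
      by_cases h : c.Rel i (c.next i)
      · rw [dNext_eq _ h, dNext_eq _ h]
        rw [dif_pos h, Functor.map_comp]; erw [G.map_preimage]
        rfl
      · rw [dNext_eq_zero _ _ h, dNext_eq_zero _ _ h, Functor.map_zero]; rfl
    have e2 : G.map (prevD i fun i j => if h : c.Rel j i then G.preimage (H.hom i j) else 0)
        = prevD i H.hom := by
      by_cases h : c.Rel (c.prev i) i
      · rw [prevD_eq _ h, prevD_eq _ h]
        rw [dif_pos h, Functor.map_comp]; erw [G.map_preimage]
        rfl
      · rw [prevD_eq_zero _ _ h, prevD_eq_zero _ _ h, Functor.map_zero]; rfl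
    rw [e1, e2]
    simp at hc ⊢
    exact hc

end Part3

section Part4
open CategoryTheory Limits

namespace NullHtpy

variable {A : Type} [Ring A]
variable {K C : CochainComplex (ModuleCat.{0} A) ℤ}

def LinkP (f : K ⟶ C) (n : ℤ) (g : K.X (n+1) ⟶ C.X n) (g' : K.X (n+1+1) ⟶ C.X (n+1)) :
    Prop :=
  f.f (n+1) = K.d (n+1) (n+1+1) ≫ g' + g ≫ C.d n (n+1)

def State (f : K ⟶ C) (n : ℤ) : Type :=
  Σ' (g : K.X (n+1) ⟶ C.X n) (g' : K.X (n+1+1) ⟶ C.X (n+1)), LinkP f n g g'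

lemma f_eq_zero (f : K ⟶ C) (b : ℤ) (hKb : ∀ n, b < n → IsZero (K.X n))
    (n : ℤ) (hn : b < n) : f.f n = 0 :=
  (hKb n hn).eq_of_src _ _

noncomputable def zstate (f : K ⟶ C) (b : ℤ) (hKb : ∀ n, b < n → IsZero (K.X n))
    (n : ℤ) (hn : b < n + 1) : State f n :=
  ⟨0, 0, by
    have h1 : f.f (n + 1) = 0 := f_eq_zero f b hKb (n+1) hn
    simp [LinkP, h1]⟩

noncomputable def step (f : K ⟶ C) (hKproj : ∀ n, Module.Projective A (K.X n))
    (hC : ∀ n, C.ExactAt n) (n : ℤ) (s : State f (n+1)) : State f n := by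
  have link := s.2.2
  rw [LinkP] at link
  have hobs : (f.f (n+1) - K.d (n+1) (n+1+1) ≫ s.1) ≫ C.d (n+1) (n+1+1) = 0 := by
    rw [Preadditive.sub_comp, Category.assoc, f.comm (n+1) (n+1+1), link]
    simp [Preadditive.add_comp, Category.assoc, HomologicalComplex.d_comp_d_assoc]
  set g : K.X (n+1) ⟶ C.X (n+1) := f.f (n+1) - K.d (n+1) (n+1+1) ≫ s.1 with hg
  have hex : ∀ x : C.X (n+1), C.d (n+1) (n+1+1) x = 0 → ∃ y : C.X n, C.d n (n+1) y = x := by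
    have he := (HomologicalComplex.exactAt_iff' C n (n+1) (n+1+1)
      (by rw [CochainComplex.prev]; ring) (by rw [CochainComplex.next])).mp (hC (n+1))
    rw [ShortComplex.moduleCat_exact_iff] at he
    exact he
  haveI := hKproj (n+1)
  set Ks : Submodule A (C.X (n+1)) := LinearMap.ker (C.d (n+1) (n+1+1)).hom with hKs
  have mem1 : ∀ y : C.X n, C.d n (n+1) y ∈ Ks := by
    intro y
    have h2 := C.d_comp_d n (n+1) (n+1+1)
    rw [LinearMap.mem_ker]
    exact congrArg (fun φ => φ.hom y) h2
  have mem2 : ∀ x : K.X (n+1), g x ∈ Ks := by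
    intro x
    rw [LinearMap.mem_ker]
    exact congrArg (fun φ => φ.hom x) hobs
  let π : C.X n →ₗ[A] Ks := LinearMap.codRestrict Ks (C.d n (n+1)).hom mem1
  let g0 : K.X (n+1) →ₗ[A] Ks := LinearMap.codRestrict Ks g.hom mem2
  have hπ : Function.Surjective π := by
    rintro ⟨x, hx⟩
    obtain ⟨y, hy⟩ := hex x (LinearMap.mem_ker.mp hx)
    exact ⟨y, Subtype.ext hy⟩
  have hlift := Module.projective_lifting_property π g0 hπ
  refine ⟨ModuleCat.ofHom hlift.choose, s.1, ?_⟩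
  have hh := hlift.choose_spec
  have hcomp : ModuleCat.ofHom hlift.choose ≫ C.d n (n+1) = g := by
    apply ModuleCat.hom_ext
    apply LinearMap.ext
    intro x
    exact congrArg Subtype.val (LinearMap.ext_iff.mp hh x)
  rw [LinkP, hcomp, hg]
  abel

noncomputable def aux (f : K ⟶ C) (b : ℤ) (hKb : ∀ n, b < n → IsZero (K.X n))
    (hKproj : ∀ n, Module.Projective A (K.X n)) (hC : ∀ n, C.ExactAt n) :
    (k : ℕ) → (n : ℤ) → n = b - k → State f n
  | 0, n, _ => zstate f b hKb n (by omega)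
  | (k+1), n, hn => step f hKproj hC n (aux f b hKb hKproj hC k (n+1) (by omega))

lemma aux_congr (f : K ⟶ C) (b : ℤ) (hKb : ∀ n, b < n → IsZero (K.X n))
    (hKproj : ∀ n, Module.Projective A (K.X n)) (hC : ∀ n, C.ExactAt n)
    (k k' : ℕ) (h : k = k') (n : ℤ) (hn : n = b - k) (hn' : n = b - k') :
    aux f b hKb hKproj hC k n hn = aux f b hKb hKproj hC k' n hn' := by
  subst h; rfl

noncomputable def auxfam (f : K ⟶ C) (b : ℤ) (hKb : ∀ n, b < n → IsZero (K.X n))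
    (hKproj : ∀ n, Module.Projective A (K.X n)) (hC : ∀ n, C.ExactAt n) (n : ℤ) :
    State f n :=
  if h : n ≤ b then aux f b hKb hKproj hC (b - n).toNat n (by omega)
  else zstate f b hKb n (by omega)

lemma auxfam_coh (f : K ⟶ C) (b : ℤ) (hKb : ∀ n, b < n → IsZero (K.X n))
    (hKproj : ∀ n, Module.Projective A (K.X n)) (hC : ∀ n, C.ExactAt n) (n : ℤ) :
    (auxfam f b hKb hKproj hC n).2.1 = (auxfam f b hKb hKproj hC (n+1)).1 := by
  by_cases h : n ≤ b
  · rcases eq_or_lt_of_le h with h2 | h2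
    · rw [auxfam, dif_pos h, aux_congr f b hKb hKproj hC ((b-n).toNat) 0 (by omega) n (by omega) (by omega),
        auxfam, dif_neg (by omega)]
      rfl
    · rw [auxfam, dif_pos h,
        aux_congr f b hKb hKproj hC ((b-n).toNat) ((b - (n+1)).toNat + 1) (by omega) n
          (by omega) (by omega),
        auxfam, dif_pos (by omega)]
      rfl
  · rw [auxfam, dif_neg h, auxfam, dif_neg (by omega)]
    rfl

lemma auxfam_link (f : K ⟶ C) (b : ℤ) (hKb : ∀ n, b < n → IsZero (K.X n))
    (hKproj : ∀ n, Module.Projective A (K.X n)) (hC : ∀ n, C.ExactAt n) (n : ℤ) :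
    f.f (n+1) = K.d (n+1) (n+1+1) ≫ (auxfam f b hKb hKproj hC n).2.1
      + (auxfam f b hKb hKproj hC n).1 ≫ C.d n (n+1) :=
  (auxfam f b hKb hKproj hC n).2.2

open Classical in
lemma nullHomotopic (f : K ⟶ C) (b : ℤ) (hKb : ∀ n, b < n → IsZero (K.X n))
    (hKproj : ∀ n, Module.Projective A (K.X n)) (hC : ∀ n, C.ExactAt n) :
    Nonempty (Homotopy f 0) := by
  refine ⟨{
    hom := fun i j => if h : (ComplexShape.up ℤ).Rel j i then
      eqToHom (congrArg K.X h.symm) ≫ (auxfam f b hKb hKproj hC j).1 else 0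
    zero := fun i j h => by simp only [dif_neg h]
    comm := fun i => ?_ }⟩
  obtain ⟨j, rfl⟩ : ∃ j : ℤ, j + 1 = i := ⟨i - 1, by omega⟩
  have hrel : (ComplexShape.up ℤ).Rel j (j+1) := rfl
  have hrel2 : (ComplexShape.up ℤ).Rel (j+1) (j+1+1) := rfl
  rw [dNext_eq _ hrel2, prevD_eq _ hrel]
  rw [dif_pos hrel2, dif_pos hrel]
  simp only [eqToHom_refl, Category.id_comp, HomologicalComplex.zero_f_apply, add_zero]
  rw [← auxfam_coh f b hKb hKproj hC j]
  exact auxfam_link f b hKb hKproj hC j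

end NullHtpy
end Part4

section Part5
open CategoryTheory Limits Pretriangulated

variable {A : Type} [Ring A]

lemma subsingleton_of_isZero {R : Type} [Ring R] {M : ModuleCat.{0} R} (h : IsZero M) :
    Subsingleton M := by
  have h1 : (𝟙 M : M ⟶ M) = 0 := h.eq_of_src _ _
  refine ⟨fun a b => ?_⟩
  have ha := LinearMap.ext_iff.mp (ModuleCat.hom_ext_iff.mp h1) a
  have hb := LinearMap.ext_iff.mp (ModuleCat.hom_ext_iff.mp h1) b
  simp only [ModuleCat.hom_zero, LinearMap.zero_apply] at ha hb
  calc a = (𝟙 M : M ⟶ M) a := rfl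
    _ = 0 := ha
    _ = (𝟙 M : M ⟶ M) b := hb.symm
    _ = b := rfl

lemma hom_eq_zero_of_acyclic (K : CochainComplex (ModuleCat.{0} A) ℤ) (b : ℤ)
    (hKb : ∀ n, b < n → IsZero (K.X n)) (hKproj : ∀ n, Module.Projective A (K.X n))
    (D : HomotopyCategory (ModuleCat.{0} A) (ComplexShape.up ℤ))
    (hD : (HomotopyCategory.subcategoryAcyclic (ModuleCat.{0} A)) D)
    (φ : (HomotopyCategory.quotient (ModuleCat.{0} A) (ComplexShape.up ℤ)).obj K ⟶ D) :
    φ = 0 := by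
  have hD' : (HomotopyCategory.subcategoryAcyclic (ModuleCat.{0} A))
      ((HomotopyCategory.quotient (ModuleCat.{0} A) (ComplexShape.up ℤ)).obj D.as) := hD
  have hC : ∀ n, D.as.ExactAt n :=
    (HomotopyCategory.quotient_obj_mem_subcategoryAcyclic_iff_exactAt D.as).mp hD'
  obtain ⟨ψ, hψ⟩ := (HomotopyCategory.quotient (ModuleCat.{0} A)
    (ComplexShape.up ℤ)).map_surjective (X := K) (Y := D.as) φ
  obtain ⟨H⟩ := NullHtpy.nullHomotopic ψ b hKb hKproj hC
  rw [← hψ, HomotopyCategory.eq_of_homotopy _ _ H, Functor.map_zero]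
  rfl

lemma postcomp_bijective_of_W (K : CochainComplex (ModuleCat.{0} A) ℤ) (b : ℤ)
    (hKb : ∀ n, b < n → IsZero (K.X n)) (hKproj : ∀ n, Module.Projective A (K.X n))
    {Y Z : HomotopyCategory (ModuleCat.{0} A) (ComplexShape.up ℤ)} (s : Y ⟶ Z)
    (hs : (HomotopyCategory.subcategoryAcyclic (ModuleCat.{0} A)).trW s) :
    Function.Bijective (fun g :
        (HomotopyCategory.quotient (ModuleCat.{0} A) (ComplexShape.up ℤ)).obj K ⟶ Y =>
      g ≫ s) := by
  obtain ⟨V, g, h, hT, hV⟩ := hs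
  constructor
  · intro φ₁ φ₂ hφ
    have h0 : (φ₁ - φ₂) ≫ (Triangle.mk s g h).invRotate.mor₂ = 0 := by
      change (φ₁ - φ₂) ≫ s = 0
      rw [Preadditive.sub_comp]
      dsimp at hφ
      rw [hφ, sub_self]
    obtain ⟨ψ, hψ⟩ := Triangle.coyoneda_exact₂ _ (inv_rot_of_distTriang _ hT) (φ₁ - φ₂) h0
    have hψ0 : ψ = 0 := by
      apply hom_eq_zero_of_acyclic K b hKb hKproj
      exact (HomotopyCategory.subcategoryAcyclic (ModuleCat.{0} A)).le_shift (-1) V hV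
    rw [hψ0, Limits.zero_comp] at hψ
    exact sub_eq_zero.mp hψ
  · intro φ
    have h0 : φ ≫ (Triangle.mk s g h).mor₂ = 0 := by
      apply hom_eq_zero_of_acyclic K b hKb hKproj
      exact hV
    obtain ⟨ψ, hψ⟩ := Triangle.coyoneda_exact₂ _ hT φ h0
    exact ⟨ψ, hψ.symm⟩

end Part5

/-- Let `O` be a commutative ring and `F` a finitely generated `O`-module admitting `O`
as a direct summand, with endomorphism ring `A = End_O(F)`.  Then `F ⊗_O -` is fully
faithful from the homotopy category of bounded complexes of finitely generated projective
`O`-modules to the derived category of `A`-modules: for bounded complexes `P`, `Q` of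
finitely generated projective `O`-modules, two chain maps `P ⟶ Q` have the same image in
`D(A)` iff they are homotopic, and every morphism `F ⊗ P ⟶ F ⊗ Q` in `D(A)` arises from
a chain map. -/
theorem tensor_fullyFaithful_on_homotopyCategory
    (O : Type) [CommRing O] (F : Type) [AddCommGroup F] [Module O F] [Module.Finite O F]
    (hsplit : ∃ (ι : O →ₗ[O] F) (p : F →ₗ[O] O), p ∘ₗ ι = LinearMap.id)
    (P Q : CochainComplex (ModuleCat.{0} O) ℤ)
    (hP : (∀ n, Module.Projective O (P.X n) ∧ Module.Finite O (P.X n)) ∧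
      ∃ a b : ℤ, ∀ n, (n < a ∨ b < n) → IsZero (P.X n))
    (hQ : (∀ n, Module.Projective O (Q.X n) ∧ Module.Finite O (Q.X n)) ∧
      ∃ a b : ℤ, ∀ n, (n < a ∨ b < n) → IsZero (Q.X n)) :
    (∀ φ₁ φ₂ : P ⟶ Q,
      DerivedCategory.Q.map
          (((tensorFunctor O F).mapHomologicalComplex (ComplexShape.up ℤ)).map φ₁) =
        DerivedCategory.Q.map
          (((tensorFunctor O F).mapHomologicalComplex (ComplexShape.up ℤ)).map φ₂) ↔
      Nonempty (Homotopy φ₁ φ₂)) ∧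
    Function.Surjective (fun φ : P ⟶ Q =>
      DerivedCategory.Q.map
        (((tensorFunctor O F).mapHomologicalComplex (ComplexShape.up ℤ)).map φ)) := by
  classical
  obtain ⟨ιF, pF, hpF⟩ := hsplit
  haveI := tensorFunctor_faithful ιF pF hpF
  haveI := tensorFunctor_full ιF pF hpF
  obtain ⟨hP1, aP, bP, hPb⟩ := hP
  set GP := (tensorFunctor O F).mapHomologicalComplex (ComplexShape.up ℤ) with hGP
  set quot := HomotopyCategory.quotient (ModuleCat.{0} (Module.End O F))
    (ComplexShape.up ℤ) with hquot
  set e := DerivedCategory.quotientCompQhIso (ModuleCat.{0} (Module.End O F)) with he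
  have hKb : ∀ n, bP < n → IsZero ((GP.obj P).X n) := by
    intro n hn
    haveI : Subsingleton (P.X n) := subsingleton_of_isZero (hPb n (Or.inr hn))
    haveI : Subsingleton ((GP.obj P).X n) := subsingleton_tensor (P.X n)
    exact ModuleCat.isZero_of_subsingleton _
  have hKproj : ∀ n, Module.Projective (Module.End O F) ((GP.obj P).X n) := by
    intro n
    haveI := (hP1 n).1
    exact projective_A_tensor ιF pF hpF (P.X n)
  have expr : ∀ (ψ : GP.obj P ⟶ GP.obj Q), DerivedCategory.Qh.map (quot.map ψ)
      = e.hom.app (GP.obj P) ≫ DerivedCategory.Q.map ψ ≫ e.inv.app (GP.obj Q) := by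
    intro ψ
    have nat := e.hom.naturality ψ
    rw [← CategoryTheory.Category.assoc, ← nat]
    simp
    rfl
  have key_iff : ∀ (ψ₁ ψ₂ : GP.obj P ⟶ GP.obj Q),
      DerivedCategory.Q.map ψ₁ = DerivedCategory.Q.map ψ₂ ↔
        DerivedCategory.Qh.map (quot.map ψ₁) = DerivedCategory.Qh.map (quot.map ψ₂) := by
    intro ψ₁ ψ₂
    rw [expr, expr, CategoryTheory.cancel_epi, CategoryTheory.cancel_mono]
  constructor
  · intro φ₁ φ₂
    constructor
    · intro hQeq
      have h1 := (key_iff (GP.map φ₁) (GP.map φ₂)).mp hQeq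
      rw [CategoryTheory.MorphismProperty.map_eq_iff_postcomp DerivedCategory.Qh
        ((HomotopyCategory.subcategoryAcyclic (ModuleCat.{0} (Module.End O F))).trW)] at h1
      obtain ⟨Z, s, hs, fac⟩ := h1
      have hbij := postcomp_bijective_of_W (GP.obj P) bP hKb hKproj s hs
      have h2 : quot.map (GP.map φ₁) = quot.map (GP.map φ₂) := hbij.1 fac
      have H := HomotopyCategory.homotopyOfEq _ _ h2
      exact ⟨homotopyOfMapHomotopy (tensorFunctor O F) φ₁ φ₂ H⟩
    · rintro ⟨H⟩
      have h2 : quot.map (GP.map φ₁) = quot.map (GP.map φ₂) :=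
        HomotopyCategory.eq_of_homotopy _ _ ((tensorFunctor O F).mapHomotopy H)
      exact (key_iff (GP.map φ₁) (GP.map φ₂)).mpr (by rw [h2])
  · intro θ
    set θh := e.hom.app (GP.obj P) ≫ θ ≫ e.inv.app (GP.obj Q) with hθh
    obtain ⟨fr, hfr⟩ := CategoryTheory.Localization.exists_leftFraction DerivedCategory.Qh
      ((HomotopyCategory.subcategoryAcyclic (ModuleCat.{0} (Module.End O F))).trW) θh
    have hbij := postcomp_bijective_of_W (GP.obj P) bP hKb hKproj fr.s fr.hs
    obtain ⟨g, hg₀⟩ := hbij.2 fr.f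
    have hg : g ≫ fr.s = fr.f := hg₀
    have hiso : CategoryTheory.IsIso (DerivedCategory.Qh.map fr.s) :=
      CategoryTheory.Localization.inverts DerivedCategory.Qh
        ((HomotopyCategory.subcategoryAcyclic (ModuleCat.{0} (Module.End O F))).trW) fr.s fr.hs
    have hQhg : DerivedCategory.Qh.map g = θh := by
      rw [← CategoryTheory.cancel_mono (DerivedCategory.Qh.map fr.s), ← Functor.map_comp, hg,
        hfr, CategoryTheory.MorphismProperty.LeftFraction.map_comp_map_s]
    obtain ⟨ψ, hψ⟩ := quot.map_surjective g
    obtain ⟨φ, hφ⟩ := mapHomologicalComplex_map_surjective (tensorFunctor O F) ψ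
    refine ⟨φ, ?_⟩
    have h3 : DerivedCategory.Qh.map (quot.map (GP.map φ)) = θh := by
      rw [show GP.map φ = ψ from hφ, hψ, hQhg]
    rw [expr] at h3
    have h5 : DerivedCategory.Q.map (GP.map φ) = e.inv.app (GP.obj P) ≫ θh ≫
        e.hom.app (GP.obj Q) := by
      rw [← h3]
      simp only [CategoryTheory.Category.assoc, CategoryTheory.Iso.inv_hom_id_app_assoc,
        CategoryTheory.Iso.inv_hom_id_app, CategoryTheory.Category.comp_id]
    show DerivedCategory.Q.map (GP.map φ) = θ
    rw [h5, hθh]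
    simp only [CategoryTheory.Category.assoc, CategoryTheory.Iso.inv_hom_id_app_assoc,
      CategoryTheory.Iso.inv_hom_id_app, CategoryTheory.Category.comp_id]
end
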